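/- arXiv:2309.14980 — 4 statements merged into one kernel-verified Lean document; each statement's English description precedes it below -/
import Mathlib

section
/- For Haar-random V on U(d) and linear operators A, B, C, D: E[tr(V† A V B) tr(V† C V D)] = (tr A tr B tr C tr D + tr(AC) tr(BD))/(d² - 1) − (tr(AC) tr B tr D + tr A tr C tr(BD))/(d(d² - 1)). -/
open MeasureTheory Matrix Complex

noncomputable section

instance matrixMeasurableSpace {m n : Type*} : MeasurableSpace (Matrix m n ℂ) :=
  (inferInstance : MeasurableSpace (m → n → ℂ))

open Kronecker

namespace Stmt8
variable {d : ℕ}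

def S (d : ℕ) : Matrix (Fin d × Fin d) (Fin d × Fin d) ℂ :=
  Matrix.of fun p q => if p.1 = q.2 ∧ p.2 = q.1 then 1 else 0

lemma S_mul_S (d : ℕ) : S d * S d = 1 := by
  ext p q
  simp only [S, Matrix.mul_apply, Matrix.of_apply, Matrix.one_apply]
  rw [Fintype.sum_prod_type]
  simp only [ite_and, mul_ite, ite_mul, mul_one, mul_zero, zero_mul, one_mul]
  simp [Finset.sum_ite_eq, Finset.sum_ite_eq', Prod.ext_iff, ite_and]

lemma trace_S (d : ℕ) : (S d).trace = d := by
  simp only [Matrix.trace, Matrix.diag, S, Matrix.of_apply]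
  rw [Fintype.sum_prod_type]
  simp [eq_comm, and_self]

lemma trace_S_mul (d : ℕ) (X Y : Matrix (Fin d) (Fin d) ℂ) :
    (S d * (X ⊗ₖ Y)).trace = (X * Y).trace := by
  simp only [Matrix.trace, Matrix.diag, Matrix.mul_apply, S, Matrix.of_apply,
    Matrix.kroneckerMap_apply]
  simp only [Fintype.sum_prod_type, ite_and, mul_ite, ite_mul, mul_one, mul_zero, zero_mul,
    one_mul, Finset.sum_ite_eq, Finset.sum_ite_eq', Finset.mem_univ, if_true]
  rw [Finset.sum_comm]



lemma kron_conjTranspose (X Y : Matrix (Fin d) (Fin d) ℂ) :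
    (X ⊗ₖ Y)ᴴ = Xᴴ ⊗ₖ Yᴴ := by
  ext p q
  simp [Matrix.conjTranspose_apply, Matrix.kroneckerMap_apply, mul_comm]

abbrev UG (d : ℕ) := Matrix.unitaryGroup (Fin d) ℂ

def conjM (B : Matrix (Fin d) (Fin d) ℂ) (V : UG d) : Matrix (Fin d) (Fin d) ℂ :=
  (V : Matrix (Fin d) (Fin d) ℂ) * B * (V : Matrix (Fin d) (Fin d) ℂ)ᴴ

def g (B D : Matrix (Fin d) (Fin d) ℂ) (V : UG d) :
    Matrix (Fin d × Fin d) (Fin d × Fin d) ℂ :=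
  (conjM B V) ⊗ₖ (conjM D V)

lemma measurable_coe_entry (i j : Fin d) :
    Measurable (fun V : UG d => (V : Matrix (Fin d) (Fin d) ℂ) i j) := by
  have h1 : Measurable (fun V : UG d => (V : Matrix (Fin d) (Fin d) ℂ)) := measurable_subtype_coe
  exact ((measurable_pi_apply j).comp ((measurable_pi_apply i).comp h1))

lemma conjM_apply (B : Matrix (Fin d) (Fin d) ℂ) (V : UG d) (p r : Fin d) :
    conjM B V p r = ∑ x, ∑ y, (V : Matrix (Fin d) (Fin d) ℂ) p x * B x y *
      star ((V : Matrix (Fin d) (Fin d) ℂ) r y) := by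
  simp only [conjM, Matrix.mul_apply, Matrix.conjTranspose_apply, Finset.sum_mul]
  rw [Finset.sum_comm]

lemma measurable_conjM (B : Matrix (Fin d) (Fin d) ℂ) (p r : Fin d) :
    Measurable (fun V : UG d => conjM B V p r) := by
  simp only [conjM_apply]
  refine Finset.measurable_sum _ fun x _ => Finset.measurable_sum _ fun y _ => ?_
  exact ((measurable_coe_entry p x).mul_const _).mul (Complex.continuous_conj.measurable.comp (measurable_coe_entry r y))

lemma norm_conjM_le (B : Matrix (Fin d) (Fin d) ℂ) (V : UG d) (p r : Fin d) :
    ‖conjM B V p r‖ ≤ ∑ x, ∑ y, ‖B x y‖ := by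
  rw [conjM_apply]
  refine (norm_sum_le _ _).trans (Finset.sum_le_sum fun x _ => ?_)
  refine (norm_sum_le _ _).trans (Finset.sum_le_sum fun y _ => ?_)
  rw [norm_mul, norm_mul, norm_star]
  calc ‖(V : Matrix (Fin d) (Fin d) ℂ) p x‖ * ‖B x y‖ * ‖(V : Matrix (Fin d) (Fin d) ℂ) r y‖
      ≤ 1 * ‖B x y‖ * 1 := by
        have h1 := entry_norm_bound_of_unitary V.2 p x
        have h2 := entry_norm_bound_of_unitary V.2 r y
        exact mul_le_mul (mul_le_mul h1 le_rfl (norm_nonneg _) zero_le_one) h2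
          (norm_nonneg _) (by positivity)
    _ = ‖B x y‖ := by ring

lemma measurable_g (B D : Matrix (Fin d) (Fin d) ℂ) (p q : Fin d × Fin d) :
    Measurable (fun V : UG d => g B D V p q) :=
  (measurable_conjM B p.1 q.1).mul (measurable_conjM D p.2 q.2)

lemma integrable_g (B D : Matrix (Fin d) (Fin d) ℂ) (μ : Measure (UG d))
    [IsProbabilityMeasure μ] (p q : Fin d × Fin d) :
    Integrable (fun V : UG d => g B D V p q) μ := by
  refine (integrable_const ((∑ x, ∑ y, ‖B x y‖) * (∑ x, ∑ y, ‖D x y‖))).mono'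
    (measurable_g B D p q).aestronglyMeasurable (ae_of_all _ fun V => ?_)
  rw [g, Matrix.kroneckerMap_apply, norm_mul]
  exact mul_le_mul (norm_conjM_le B V _ _) (norm_conjM_le D V _ _) (norm_nonneg _)
    (Finset.sum_nonneg fun x _ => Finset.sum_nonneg fun y _ => norm_nonneg _)


def phaseU (t : Fin d) : Matrix (Fin d) (Fin d) ℂ :=
  Matrix.diagonal (fun r => if r = t then Complex.I else 1)

lemma phaseU_mem (t : Fin d) : phaseU t ∈ Matrix.unitaryGroup (Fin d) ℂ := by
  rw [Matrix.mem_unitaryGroup_iff, Matrix.star_eq_conjTranspose, phaseU,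
    Matrix.diagonal_conjTranspose, Matrix.diagonal_mul_diagonal]
  ext i j
  rcases eq_or_ne i j with rfl | h
  · by_cases ht : i = t <;> simp [Matrix.diagonal_apply_eq, ht, Complex.conj_I, Matrix.one_apply]
  · simp [Matrix.diagonal_apply_ne _ h, Matrix.one_apply, h]

def permM {ι : Type*} [DecidableEq ι] (σ : Equiv.Perm ι) : Matrix ι ι ℂ :=
  Matrix.of fun i j => if σ j = i then 1 else 0

lemma perm_inv_apply_self {ι : Type*} (σ : Equiv.Perm ι) (x : ι) : σ⁻¹ (σ x) = x :=
  Equiv.Perm.inv_eq_iff_eq.mpr rfl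

lemma permM_mul_apply {ι : Type*} [Fintype ι] [DecidableEq ι] (σ : Equiv.Perm ι)
    (M : Matrix ι ι ℂ) (p q : ι) : (permM σ * M) p q = M (σ⁻¹ p) q := by
  simp only [Matrix.mul_apply, permM, Matrix.of_apply]
  rw [Finset.sum_eq_single (σ⁻¹ p)]
  · simp
  · intro b _ hb
    have : σ b ≠ p := fun h => hb (by rw [← h, perm_inv_apply_self])
    simp [this]
  · simp

lemma mul_permM_apply {ι : Type*} [Fintype ι] [DecidableEq ι] (σ : Equiv.Perm ι)
    (M : Matrix ι ι ℂ) (p q : ι) : (M * permM σ) p q = M p (σ q) := by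
  simp [Matrix.mul_apply, permM, mul_ite, mul_one, mul_zero, Finset.sum_ite_eq]

lemma permM_mem (σ : Equiv.Perm (Fin d)) : permM σ ∈ Matrix.unitaryGroup (Fin d) ℂ := by
  rw [Matrix.mem_unitaryGroup_iff, Matrix.star_eq_conjTranspose]
  ext i j
  simp only [Matrix.mul_apply, permM, Matrix.conjTranspose_apply, Matrix.of_apply]
  rw [Fintype.sum_bijective σ σ.bijective _
    (fun m => (if m = i then (1:ℂ) else 0) * (if m = j then (1:ℂ) else 0))
    (fun k => by simp [apply_ite (starRingEnd ℂ)])]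
  simp [ite_mul, one_mul, zero_mul, Finset.sum_ite_eq, Matrix.one_apply]
  exact if_congr eq_comm rfl rfl

lemma permM_kron (σ : Equiv.Perm (Fin d)) :
    (permM σ) ⊗ₖ (permM σ) = permM (σ.prodCongr σ) := by
  ext p q
  simp only [permM, Matrix.kroneckerMap_apply, Matrix.of_apply, Equiv.prodCongr_apply,
    Prod.ext_iff, ite_and, Prod.map]
  by_cases h1 : σ q.1 = p.1 <;> by_cases h2 : σ q.2 = p.2 <;> simp [h1, h2]


lemma sum_eq_pair {i0 i1 : Fin d} (h01 : i0 ≠ i1) (f : Fin d → ℂ)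
    (h : ∀ k, k ≠ i0 → k ≠ i1 → f k = 0) : ∑ k, f k = f i0 + f i1 := by
  rw [← Finset.sum_pair h01]
  exact (Finset.sum_subset (Finset.subset_univ _) (fun x _ hx => by
    simp only [Finset.mem_insert, Finset.mem_singleton, not_or] at hx
    exact h x hx.1 hx.2)).symm

def rotU (i0 i1 : Fin d) : Matrix (Fin d) (Fin d) ℂ :=
  Matrix.of fun r s =>
    if r = i0 then (if s = i0 then 3/5 else if s = i1 then 4/5 else 0)
    else if r = i1 then (if s = i0 then -(4/5) else if s = i1 then 3/5 else 0)
    else if r = s then 1 else 0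

lemma rotU_mem {i0 i1 : Fin d} (h01 : i0 ≠ i1) :
    rotU i0 i1 ∈ Matrix.unitaryGroup (Fin d) ℂ := by
  rw [Matrix.mem_unitaryGroup_iff, Matrix.star_eq_conjTranspose]
  ext i j
  simp only [Matrix.mul_apply, Matrix.conjTranspose_apply, rotU, Matrix.of_apply]
  by_cases hi0 : i = i0 <;> by_cases hi1 : i = i1 <;> by_cases hj0 : j = i0 <;>
    by_cases hj1 : j = i1
  all_goals (try (cases h01 (hi0.symm.trans hi1)))
  all_goals (try (cases h01 (hj0.symm.trans hj1)))
  -- cases where i ∈ {i0,i1} : sum supported on {i0, i1}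
  · -- i = i0, j = i0
    rw [sum_eq_pair h01 _ (fun k hk0 hk1 => by simp [hi0, hj0, hk0, hk1])]
    simp [hi0, hj0, h01, h01.symm, Matrix.one_apply, Complex.conj_ofNat]
    norm_num
  · -- i = i0, j = i1
    rw [sum_eq_pair h01 _ (fun k hk0 hk1 => by simp [hi0, hj1, hk0, hk1])]
    simp [hi0, hj1, h01, h01.symm, Matrix.one_apply, Complex.conj_ofNat]
    norm_num
  · -- i = i0, j ∉ {i0,i1}
    rw [sum_eq_pair h01 _ (fun k hk0 hk1 => by simp [hi0, hj0, hj1, hk0, hk1])]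
    simp [hi0, hj0, hj1, h01, h01.symm, Matrix.one_apply, Ne.symm hj0, Ne.symm hj1]
  · -- i = i1, j = i0
    rw [sum_eq_pair h01 _ (fun k hk0 hk1 => by simp [hi1, hj0, hk0, hk1])]
    simp [hi1, hj0, h01, h01.symm, Matrix.one_apply, Complex.conj_ofNat]
    norm_num
  · -- i = i1, j = i1
    rw [sum_eq_pair h01 _ (fun k hk0 hk1 => by simp [hi1, hj1, hk0, hk1])]
    simp [hi1, hj1, h01, h01.symm, Matrix.one_apply, Complex.conj_ofNat]
    norm_num
  · -- i = i1, j ∉ {i0,i1}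
    rw [sum_eq_pair h01 _ (fun k hk0 hk1 => by simp [hi1, hj0, hj1, hk0, hk1])]
    simp [hi1, hj0, hj1, h01, h01.symm, Matrix.one_apply, Ne.symm hj0, Ne.symm hj1]
  · -- i ∉ {i0,i1}, j = i0
    rw [Finset.sum_eq_single i (fun k _ hk => by
      simp [hi0, hi1, hj0]
      intro h; exact absurd h.symm hk) (by simp)]
    simp [hi0, hi1, hj0, Matrix.one_apply, Ne.symm hi0, Ne.symm hi1]
  · -- i ∉ {i0,i1}, j = i1
    rw [Finset.sum_eq_single i (fun k _ hk => by
      simp [hi0, hi1, hj1]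
      intro h; exact absurd h.symm hk) (by simp)]
    simp [hi0, hi1, hj1, Matrix.one_apply, Ne.symm hi0, Ne.symm hi1]
  · -- i,j ∉ {i0,i1}
    rw [Finset.sum_eq_single i (fun k _ hk => by
      simp [hi0, hi1]
      intro h; exact absurd h.symm hk) (by simp)]
    simp [hi0, hi1, hj0, hj1, Matrix.one_apply, eq_comm]


/-- phase factor -/
def ph (x y t : Fin d) : ℂ := (if x = t then Complex.I else 1) * (if y = t then Complex.I else 1)

lemma ph_cnt (x y t : Fin d) :
    ph x y t = Complex.I ^ (((if x = t then 1 else 0) + (if y = t then 1 else 0) : ℕ)) := by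
  by_cases hx : x = t <;> by_cases hy : y = t <;> simp [ph, hx, hy, pow_succ, sq]

lemma cnt_match {i j k l : Fin d}
    (h : ∀ t : Fin d, ((if i = t then 1 else 0) + (if j = t then 1 else 0) : ℕ)
      = (if k = t then 1 else 0) + (if l = t then 1 else 0)) :
    (k = i ∧ l = j) ∨ (k = j ∧ l = i) := by
  have Hi := h i; have Hj := h j
  clear h
  simp only [eq_self_iff_true, if_true] at Hi Hj
  by_cases hij : i = j
  · subst hij
    by_cases hk : k = i
    · by_cases hl : l = i
      · exact Or.inl ⟨hk, hl⟩
      · exfalso; simp [hk, hl] at Hi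
    · exfalso; simp [hk] at Hi; split_ifs at Hi <;> omega
  · have hji : ¬ j = i := fun h' => hij h'.symm
    simp only [if_neg hji] at Hi
    simp only [if_neg hij] at Hj
    by_cases hki : k = i
    · by_cases hlj : l = j
      · exact Or.inl ⟨hki, hlj⟩
      · exfalso
        have hkj : ¬ k = j := by rw [hki]; exact hij
        simp [hkj, hlj] at Hj
    · by_cases hli : l = i
      · by_cases hkj : k = j
        · exact Or.inr ⟨hkj, hli⟩
        · exfalso
          have hlj : ¬ l = j := by rw [hli]; exact hij
          simp [hkj, hlj] at Hj
      · exfalso; simp [hki, hli] at Hi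

lemma ph_match {i j k l : Fin d} (h : ∀ t : Fin d, ph i j t = ph k l t) :
    (k = i ∧ l = j) ∨ (k = j ∧ l = i) := by
  refine cnt_match (fun t => ?_)
  have := h t
  rw [ph_cnt, ph_cnt] at this
  have hI : ∀ n : ℕ, n ≤ 2 → ∀ m : ℕ, m ≤ 2 → Complex.I ^ n = Complex.I ^ m → n = m := by
    intro n hn m hm he
    interval_cases n <;> interval_cases m <;>
      simp only [pow_succ, pow_zero, one_mul, Complex.I_mul_I] at he <;>
      first | rfl | (norm_num [Complex.ext_iff] at he)
  refine hI _ (by split_ifs <;> omega) _ (by split_ifs <;> omega) this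

section Structure

variable {M : Matrix (Fin d × Fin d) (Fin d × Fin d) ℂ}

lemma phase_eq
    (hcomm : ∀ A ∈ Matrix.unitaryGroup (Fin d) ℂ, (A ⊗ₖ A) * M = M * (A ⊗ₖ A))
    (p q : Fin d × Fin d) (t : Fin d) :
    ph p.1 p.2 t * M p q = M p q * ph q.1 q.2 t := by
  have h := hcomm (phaseU t) (phaseU_mem t)
  have h2 : (phaseU t) ⊗ₖ (phaseU t)
      = Matrix.diagonal (fun r : Fin d × Fin d =>
          (if r.1 = t then Complex.I else 1) * (if r.2 = t then Complex.I else 1)) := by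
    rw [phaseU, Matrix.diagonal_kronecker_diagonal]
  rw [h2] at h
  have := congrFun (congrFun h p) q
  rwa [Matrix.diagonal_mul, Matrix.mul_diagonal] at this

lemma entry_zero
    (hcomm : ∀ A ∈ Matrix.unitaryGroup (Fin d) ℂ, (A ⊗ₖ A) * M = M * (A ⊗ₖ A))
    (p q : Fin d × Fin d)
    (h : ¬((q.1 = p.1 ∧ q.2 = p.2) ∨ (q.1 = p.2 ∧ q.2 = p.1))) : M p q = 0 := by
  by_contra hne
  refine h (ph_match (fun t => ?_))
  have h1 := phase_eq hcomm p q t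
  rw [mul_comm (M p q)] at h1
  exact mul_right_cancel₀ hne h1

lemma perm_transport
    (hcomm : ∀ A ∈ Matrix.unitaryGroup (Fin d) ℂ, (A ⊗ₖ A) * M = M * (A ⊗ₖ A))
    (σ : Equiv.Perm (Fin d)) (p q : Fin d × Fin d) :
    M (σ p.1, σ p.2) (σ q.1, σ q.2) = M p q := by
  have h := hcomm (permM σ) (permM_mem σ)
  rw [permM_kron] at h
  have h2 := congrFun (congrFun h (σ.prodCongr σ p)) q
  rw [permM_mul_apply, mul_permM_apply, perm_inv_apply_self] at h2
  have : σ.prodCongr σ p = (σ p.1, σ p.2) := rfl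
  have h3 : σ.prodCongr σ q = (σ q.1, σ q.2) := rfl
  rw [this, h3] at h2
  exact h2.symm

lemma exists_perm {i0 i1 : Fin d} (h01 : i0 ≠ i1) (i j : Fin d) (hij : i ≠ j) :
    ∃ σ : Equiv.Perm (Fin d), σ i0 = i ∧ σ i1 = j := by
  set τ := Equiv.swap i0 i with hτ
  have hj' : τ i1 ≠ i := by
    intro h
    have h2 : i1 = τ i := by rw [← h, hτ, Equiv.swap_apply_self]
    rw [hτ, Equiv.swap_apply_right] at h2
    exact h01 h2.symm
  refine ⟨τ.trans (Equiv.swap (τ i1) j), ?_, ?_⟩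
  · simp only [Equiv.trans_apply, hτ, Equiv.swap_apply_left]
    exact Equiv.swap_apply_of_ne_of_ne (Ne.symm hj') hij
  · simp only [Equiv.trans_apply]
    exact Equiv.swap_apply_left _ _

lemma diag_relation
    (hcomm : ∀ A ∈ Matrix.unitaryGroup (Fin d) ℂ, (A ⊗ₖ A) * M = M * (A ⊗ₖ A))
    {i0 i1 : Fin d} (h01 : i0 ≠ i1) :
    M (i0, i0) (i0, i0) = M (i0, i1) (i0, i1) + M (i0, i1) (i1, i0) := by
  have h := hcomm (rotU i0 i1) (rotU_mem h01)
  have h2 := congrFun (congrFun h (i0, i1)) (i0, i0)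
  have hW : ∀ r s : Fin d × Fin d, ((rotU i0 i1) ⊗ₖ (rotU i0 i1)) r s
      = rotU i0 i1 r.1 s.1 * rotU i0 i1 r.2 s.2 := fun r s => rfl
  -- LHS sum: only r = (i0,i0) contributes
  have hL : (((rotU i0 i1) ⊗ₖ (rotU i0 i1)) * M) (i0, i1) (i0, i0)
      = (rotU i0 i1 i0 i0 * rotU i0 i1 i1 i0) * M (i0, i0) (i0, i0) := by
    rw [Matrix.mul_apply]
    rw [Finset.sum_eq_single ((i0, i0) : Fin d × Fin d)]
    · rw [hW]
    · intro r _ hr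
      have : M r (i0, i0) = 0 := by
        refine entry_zero hcomm _ _ ?_
        simp only [not_or, not_and]
        constructor
        · intro ha hb; exact hr (Prod.ext_iff.mpr ⟨ha.symm, hb.symm⟩)
        · intro ha hb; exact hr (Prod.ext_iff.mpr ⟨hb.symm, ha.symm⟩)
      rw [this, mul_zero]
    · simp
  -- RHS sum: only s = (i0,i1) and s = (i1,i0) contribute
  have hR : (M * ((rotU i0 i1) ⊗ₖ (rotU i0 i1))) (i0, i1) (i0, i0)
      = M (i0, i1) (i0, i1) * (rotU i0 i1 i0 i0 * rotU i0 i1 i1 i0)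
        + M (i0, i1) (i1, i0) * (rotU i0 i1 i1 i0 * rotU i0 i1 i0 i0) := by
    rw [Matrix.mul_apply]
    rw [← Finset.sum_subset (Finset.subset_univ ({((i0,i1) : Fin d × Fin d), ((i1,i0) : Fin d × Fin d)} : Finset (Fin d × Fin d)))]
    · rw [Finset.sum_pair (by simp [Prod.ext_iff, h01])]
      rw [hW, hW]
    · intro s _ hs
      simp only [Finset.mem_insert, Finset.mem_singleton, not_or] at hs
      have : M (i0, i1) s = 0 := by
        refine entry_zero hcomm _ _ ?_
        simp only [not_or, not_and]
        constructor
        · intro ha hb; exact hs.1 (Prod.ext_iff.mpr ⟨ha, hb⟩)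
        · intro ha hb; exact hs.2 (Prod.ext_iff.mpr ⟨ha, hb⟩)
      rw [this, zero_mul]
  rw [hL, hR] at h2
  have hval0 : rotU i0 i1 i0 i0 = 3/5 := by simp [rotU]
  have hval1 : rotU i0 i1 i1 i0 = -(4/5) := by simp [rotU, Ne.symm h01]
  rw [hval0, hval1] at h2
  linear_combination (-25/12 : ℂ) * h2

end Structure


theorem M_structure (hd : 2 ≤ d) (M : Matrix (Fin d × Fin d) (Fin d × Fin d) ℂ)
    (hcomm : ∀ A ∈ Matrix.unitaryGroup (Fin d) ℂ, (A ⊗ₖ A) * M = M * (A ⊗ₖ A)) :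
    ∃ a b : ℂ, M = a • 1 + b • S d := by
  have h0 : 0 < d := by omega
  have h1 : 1 < d := by omega
  set i0 : Fin d := ⟨0, h0⟩
  set i1 : Fin d := ⟨1, h1⟩
  have h01 : i0 ≠ i1 := by simp [i0, i1, Fin.ext_iff]
  refine ⟨M (i0, i1) (i0, i1), M (i0, i1) (i1, i0), ?_⟩
  ext p q
  obtain ⟨i, j⟩ := p
  obtain ⟨k, l⟩ := q
  simp only [Matrix.add_apply, Matrix.smul_apply, Matrix.one_apply, S, Matrix.of_apply,
    smul_eq_mul, Prod.mk.injEq]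
  by_cases h1' : k = i ∧ l = j
  · by_cases h2 : k = j ∧ l = i
    · -- diagonal entry
      obtain ⟨rfl, rfl⟩ := h1'
      have hkl : k = l := h2.1
      rw [hkl]
      have ht := perm_transport hcomm (Equiv.swap i0 l) ((i0, i0)) ((i0, i0))
      simp only [Equiv.swap_apply_left] at ht
      rw [ht, diag_relation hcomm h01]
      simp
    · -- a case
      obtain ⟨rfl, rfl⟩ := h1'
      have hkl : k ≠ l := fun hc => h2 ⟨hc, hc.symm⟩
      obtain ⟨σ, hσ0, hσ1⟩ := exists_perm h01 k l hkl
      have ht := perm_transport hcomm σ ((i0, i1)) ((i0, i1))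
      simp only [hσ0, hσ1] at ht
      rw [ht]
      simp [hkl, Ne.symm hkl]
  · by_cases h2 : k = j ∧ l = i
    · -- b case
      obtain ⟨rfl, rfl⟩ := h2
      have hkl : k ≠ l := fun hc => h1' ⟨hc, hc.symm⟩
      obtain ⟨σ, hσ0, hσ1⟩ := exists_perm h01 l k (Ne.symm hkl)
      have ht := perm_transport hcomm σ ((i0, i1)) ((i1, i0))
      simp only [hσ0, hσ1] at ht
      rw [ht]
      simp [hkl, Ne.symm hkl]
    · -- zero case
      rw [entry_zero hcomm (i, j) (k, l) (by
        simp only [not_or]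
        exact ⟨fun hc => h1' hc, fun hc => h2 hc⟩)]
      rw [if_neg (fun hc => h1' ⟨hc.1.symm, hc.2.symm⟩),
        if_neg (fun hc : i = l ∧ j = k => h2 ⟨hc.2.symm, hc.1.symm⟩)]
      ring


section Integral
variable (μ : Measure (UG d)) [IsProbabilityMeasure μ]

def Mint (B D : Matrix (Fin d) (Fin d) ℂ) : Matrix (Fin d × Fin d) (Fin d × Fin d) ℂ :=
  Matrix.of fun p q => ∫ V, g B D V p q ∂μ

lemma trace_mul_Mint (B D : Matrix (Fin d) (Fin d) ℂ)
    (N : Matrix (Fin d × Fin d) (Fin d × Fin d) ℂ) :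
    (N * Mint μ B D).trace = ∫ V, (N * g B D V).trace ∂μ := by
  have key : ∀ V : UG d, (N * g B D V).trace = ∑ p, ∑ q, N p q * g B D V q p := by
    intro V; simp [Matrix.trace, Matrix.diag, Matrix.mul_apply]
  simp_rw [key]
  rw [integral_finset_sum _ (fun p _ => integrable_finset_sum _
    (fun q _ => (integrable_g B D μ q p).const_mul (N p q)))]
  have lhs : (N * Mint μ B D).trace = ∑ p, ∑ q, N p q * ∫ V, g B D V q p ∂μ := by
    simp [Matrix.trace, Matrix.diag, Matrix.mul_apply, Mint]
  rw [lhs]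
  refine Finset.sum_congr rfl (fun p _ => ?_)
  rw [integral_finset_sum _ (fun q _ => (integrable_g B D μ q p).const_mul (N p q))]
  exact Finset.sum_congr rfl (fun q _ => (integral_const_mul _ _).symm)

lemma measurable_mulLeft (U : UG d) : Measurable (fun V : UG d => U * V) := by
  have h : Measurable (fun V : UG d =>
      ((U : Matrix (Fin d) (Fin d) ℂ) * (V : Matrix (Fin d) (Fin d) ℂ))) := by
    apply measurable_pi_lambda
    intro i
    apply measurable_pi_lambda
    intro j
    simp only [Matrix.mul_apply]
    exact Finset.measurable_sum _ (fun k _ => (measurable_coe_entry k j).const_mul _)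
  exact Measurable.subtype_mk h

lemma coe_V_conj_V (V : UG d) :
    (V : Matrix (Fin d) (Fin d) ℂ)ᴴ * (V : Matrix (Fin d) (Fin d) ℂ) = 1 := by
  have := V.2.1
  rwa [Matrix.star_eq_conjTranspose] at this

lemma conjM_mulLeft (B : Matrix (Fin d) (Fin d) ℂ) (U V : UG d) :
    conjM B (U * V) = (U : Matrix (Fin d) (Fin d) ℂ) * conjM B V
      * (U : Matrix (Fin d) (Fin d) ℂ)ᴴ := by
  have hc : ((U * V : UG d) : Matrix (Fin d) (Fin d) ℂ)
      = (U : Matrix (Fin d) (Fin d) ℂ) * (V : Matrix (Fin d) (Fin d) ℂ) := rfl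
  simp [conjM, hc, Matrix.conjTranspose_mul, Matrix.mul_assoc]

lemma g_mulLeft (B D : Matrix (Fin d) (Fin d) ℂ) (U V : UG d) :
    g B D (U * V) = (((U : Matrix (Fin d) (Fin d) ℂ)) ⊗ₖ ((U : Matrix (Fin d) (Fin d) ℂ)))
      * g B D V
      * (((U : Matrix (Fin d) (Fin d) ℂ)) ⊗ₖ ((U : Matrix (Fin d) (Fin d) ℂ)))ᴴ := by
  rw [kron_conjTranspose]
  show g B D (U * V) = _
  rw [g, conjM_mulLeft, conjM_mulLeft, Matrix.mul_kronecker_mul, Matrix.mul_kronecker_mul]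
  rfl

lemma Mint_conj (hinv : ∀ U : UG d, μ.map (fun V => U * V) = μ)
    (B D : Matrix (Fin d) (Fin d) ℂ) (U : UG d) :
    Mint μ B D = (((U : Matrix (Fin d) (Fin d) ℂ)) ⊗ₖ ((U : Matrix (Fin d) (Fin d) ℂ)))
      * Mint μ B D
      * (((U : Matrix (Fin d) (Fin d) ℂ)) ⊗ₖ ((U : Matrix (Fin d) (Fin d) ℂ)))ᴴ := by
  set W := (((U : Matrix (Fin d) (Fin d) ℂ)) ⊗ₖ ((U : Matrix (Fin d) (Fin d) ℂ))) with hW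
  ext p q
  have expand : ∀ X : Matrix (Fin d × Fin d) (Fin d × Fin d) ℂ,
      (W * X * Wᴴ) p q = ∑ s, ∑ r, (W p r * star (W q s)) * X r s := by
    intro X
    simp only [Matrix.mul_apply, Matrix.conjTranspose_apply, Finset.sum_mul]
    refine Finset.sum_congr rfl (fun s _ => Finset.sum_congr rfl (fun r _ => by ring))
  rw [expand]
  have h1 : Mint μ B D p q = ∫ V, g B D V p q ∂μ := rfl
  rw [h1]
  have h2 : ∫ V, g B D V p q ∂μ = ∫ V, g B D (U * V) p q ∂μ := by
    conv_lhs => rw [← hinv U]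
    exact integral_map (measurable_mulLeft U).aemeasurable
      (measurable_g B D p q).aestronglyMeasurable
  rw [h2]
  have h3 : ∀ V : UG d, g B D (U * V) p q
      = ∑ s, ∑ r, (W p r * star (W q s)) * g B D V r s := by
    intro V; rw [g_mulLeft]; exact expand _
  simp_rw [h3]
  rw [integral_finset_sum _ (fun s _ => integrable_finset_sum _
    (fun r _ => (integrable_g B D μ r s).const_mul _))]
  refine Finset.sum_congr rfl (fun s _ => ?_)
  rw [integral_finset_sum _ (fun r _ => (integrable_g B D μ r s).const_mul _)]
  refine Finset.sum_congr rfl (fun r _ => ?_)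
  rw [integral_const_mul]
  rfl

lemma Mint_comm (hinv : ∀ U : UG d, μ.map (fun V => U * V) = μ)
    (B D : Matrix (Fin d) (Fin d) ℂ) :
    ∀ A ∈ Matrix.unitaryGroup (Fin d) ℂ,
      (A ⊗ₖ A) * Mint μ B D = Mint μ B D * (A ⊗ₖ A) := by
  intro A hA
  have hc := Mint_conj μ hinv B D ⟨A, hA⟩
  have h1 : Aᴴ * A = 1 := by
    have := hA.1; rwa [Matrix.star_eq_conjTranspose] at this
  have hWW : ((A ⊗ₖ A) : Matrix (Fin d × Fin d) (Fin d × Fin d) ℂ)ᴴ * (A ⊗ₖ A) = 1 := by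
    rw [kron_conjTranspose, ← Matrix.mul_kronecker_mul, h1, Matrix.one_kronecker_one]
  have hc' : Mint μ B D = (A ⊗ₖ A) * Mint μ B D * (A ⊗ₖ A)ᴴ := hc
  conv_rhs => rw [hc']
  rw [Matrix.mul_assoc ((A ⊗ₖ A) * Mint μ B D), hWW, Matrix.mul_one]

lemma trace_conjM (B : Matrix (Fin d) (Fin d) ℂ) (V : UG d) :
    (conjM B V).trace = B.trace := by
  rw [conjM, Matrix.trace_mul_cycle, coe_V_conj_V, Matrix.one_mul]

lemma conjM_mul (B D : Matrix (Fin d) (Fin d) ℂ) (V : UG d) :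
    conjM B V * conjM D V = conjM (B * D) V := by
  have h : (V : Matrix (Fin d) (Fin d) ℂ)ᴴ * ((V : Matrix (Fin d) (Fin d) ℂ)
      * (D * (V : Matrix (Fin d) (Fin d) ℂ)ᴴ)) = D * (V : Matrix (Fin d) (Fin d) ℂ)ᴴ := by
    rw [← Matrix.mul_assoc, coe_V_conj_V, Matrix.one_mul]
  simp only [conjM, Matrix.mul_assoc, h]

lemma trace_g (B D : Matrix (Fin d) (Fin d) ℂ) (V : UG d) :
    (g B D V).trace = B.trace * D.trace := by
  rw [g, Matrix.trace_kronecker, trace_conjM, trace_conjM]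

lemma trace_S_g (B D : Matrix (Fin d) (Fin d) ℂ) (V : UG d) :
    (S d * g B D V).trace = (B * D).trace := by
  rw [g, trace_S_mul, conjM_mul, trace_conjM]

lemma integrand_eq (A B C D : Matrix (Fin d) (Fin d) ℂ) (V : UG d) :
    ((V : Matrix (Fin d) (Fin d) ℂ)ᴴ * A * (V : Matrix (Fin d) (Fin d) ℂ) * B).trace
      * ((V : Matrix (Fin d) (Fin d) ℂ)ᴴ * C * (V : Matrix (Fin d) (Fin d) ℂ) * D).trace
      = ((A ⊗ₖ C) * g B D V).trace := by
  rw [g, ← Matrix.mul_kronecker_mul, Matrix.trace_kronecker]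
  have key : ∀ X Y : Matrix (Fin d) (Fin d) ℂ,
      (X * conjM Y V).trace
        = ((V : Matrix (Fin d) (Fin d) ℂ)ᴴ * X * (V : Matrix (Fin d) (Fin d) ℂ) * Y).trace := by
    intro X Y
    rw [conjM, show X * ((V : Matrix (Fin d) (Fin d) ℂ) * Y
        * (V : Matrix (Fin d) (Fin d) ℂ)ᴴ)
      = (X * (V : Matrix (Fin d) (Fin d) ℂ) * Y) * (V : Matrix (Fin d) (Fin d) ℂ)ᴴ from by
        simp [Matrix.mul_assoc]]
    rw [Matrix.trace_mul_comm]
    simp [Matrix.mul_assoc]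
  rw [key, key]

end Integral
end Stmt8

open Kronecker in
/-- **Second-moment Haar integral for products of traces:**
`E[tr(V† A V B) tr(V† C V D)] = (tr A tr B tr C tr D + tr(AC) tr(BD))/(d²−1)
  − (tr(AC) tr B tr D + tr A tr C tr(BD))/(d(d²−1))` for Haar-random `V ∈ U(d)`, `d ≥ 2`. -/
theorem stmt8 (d : ℕ) (hd : 2 ≤ d)
    (μ : Measure (Matrix.unitaryGroup (Fin d) ℂ)) [IsProbabilityMeasure μ]
    (hinv : ∀ U : Matrix.unitaryGroup (Fin d) ℂ, μ.map (fun V => U * V) = μ)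
    (A B C D : Matrix (Fin d) (Fin d) ℂ) :
    (∫ (V : Matrix.unitaryGroup (Fin d) ℂ),
        ((((V : Matrix (Fin d) (Fin d) ℂ))ᴴ * A * (V : Matrix (Fin d) (Fin d) ℂ) * B).trace *
         (((V : Matrix (Fin d) (Fin d) ℂ))ᴴ * C * (V : Matrix (Fin d) (Fin d) ℂ) * D).trace) ∂μ)
      = (A.trace * B.trace * C.trace * D.trace + (A * C).trace * (B * D).trace)
          / ((d : ℂ) ^ 2 - 1)
        - ((A * C).trace * B.trace * D.trace + A.trace * C.trace * (B * D).trace)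
          / ((d : ℂ) * ((d : ℂ) ^ 2 - 1)) := by
  classical
  have hd0 : (d : ℂ) ≠ 0 := Nat.cast_ne_zero.mpr (by omega)
  have hd2 : ((d : ℂ) ^ 2 - 1) ≠ 0 := by
    intro h
    have h2 : ((d ^ 2 : ℕ) : ℂ) = ((1 : ℕ) : ℂ) := by push_cast; linear_combination h
    have h3 : d ^ 2 = 1 := Nat.cast_inj.mp h2
    nlinarith
  obtain ⟨a, b, hM⟩ := Stmt8.M_structure hd (Stmt8.Mint μ B D) (Stmt8.Mint_comm μ hinv B D)
  have tM : (Stmt8.Mint μ B D).trace = a * (d : ℂ) ^ 2 + b * (d : ℂ) := by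
    rw [hM, Matrix.trace_add, Matrix.trace_smul, Matrix.trace_smul, Matrix.trace_one,
      Stmt8.trace_S]
    simp only [Fintype.card_prod, Fintype.card_fin, smul_eq_mul]
    push_cast; ring
  have tSM : (Stmt8.S d * Stmt8.Mint μ B D).trace = a * (d : ℂ) + b * (d : ℂ) ^ 2 := by
    rw [hM, Matrix.mul_add, mul_smul_comm, mul_smul_comm, Stmt8.S_mul_S, Matrix.mul_one,
      Matrix.trace_add, Matrix.trace_smul, Matrix.trace_smul, Matrix.trace_one, Stmt8.trace_S]
    simp only [Fintype.card_prod, Fintype.card_fin, smul_eq_mul]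
    push_cast; ring
  have E1 : a * (d : ℂ) ^ 2 + b * (d : ℂ) = B.trace * D.trace := by
    rw [← tM]
    have h1 := Stmt8.trace_mul_Mint μ B D 1
    simp only [Matrix.one_mul] at h1
    rw [h1]
    simp_rw [Stmt8.trace_g]
    simp
  have E2 : a * (d : ℂ) + b * (d : ℂ) ^ 2 = (B * D).trace := by
    rw [← tSM, Stmt8.trace_mul_Mint μ B D (Stmt8.S d)]
    simp_rw [Stmt8.trace_S_g]
    simp
  have hT : (∫ (V : Matrix.unitaryGroup (Fin d) ℂ),
        ((((V : Matrix (Fin d) (Fin d) ℂ))ᴴ * A * (V : Matrix (Fin d) (Fin d) ℂ) * B).trace *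
         (((V : Matrix (Fin d) (Fin d) ℂ))ᴴ * C * (V : Matrix (Fin d) (Fin d) ℂ) * D).trace) ∂μ)
      = ((A ⊗ₖ C) * Stmt8.Mint μ B D).trace := by
    rw [Stmt8.trace_mul_Mint μ B D (A ⊗ₖ C)]
    simp_rw [Stmt8.integrand_eq]
  have hACM : ((A ⊗ₖ C) * Stmt8.Mint μ B D).trace
      = a * (A.trace * C.trace) + b * (A * C).trace := by
    rw [hM, Matrix.mul_add, mul_smul_comm, mul_smul_comm, Matrix.mul_one]
    rw [Matrix.trace_add, Matrix.trace_smul, Matrix.trace_smul, Matrix.trace_kronecker,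
      Matrix.trace_mul_comm, Stmt8.trace_S_mul]
    simp [smul_eq_mul]
  rw [hT, hACM]
  have ha : a = ((d : ℂ) * (B.trace * D.trace) - (B * D).trace)
      / ((d : ℂ) * ((d : ℂ) ^ 2 - 1)) := by
    rw [eq_div_iff (by exact mul_ne_zero hd0 hd2)]
    linear_combination (d : ℂ) * E1 - E2
  have hb : b = ((d : ℂ) * (B * D).trace - B.trace * D.trace)
      / ((d : ℂ) * ((d : ℂ) ^ 2 - 1)) := by
    rw [eq_div_iff (by exact mul_ne_zero hd0 hd2)]
    linear_combination (d : ℂ) * E2 - E1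
  rw [ha, hb]
  field_simp
  ring
end
end

section
/- Let D_{μν} = ∂_μ∂_ν(|ψ(θ)⟩⟨ψ(θ)|) for a circuit U(θ) = ∏_μ e^{−iΩ_μθ_μ} W_μ applied to a fixed state. Then D_{μν} is traceless Hermitian, has rank at most 4, and ‖D_{μν}‖_∞ ≤ 4‖Ω_μ‖_∞ ‖Ω_ν‖_∞; consequently ‖D_{μν}‖_2 ≤ 8‖Ω_μ‖_∞‖Ω_ν‖_∞. -/
open Matrix Complex

noncomputable section

set_option maxHeartbeats 1000000
set_option synthInstance.maxHeartbeats 1000000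

noncomputable section

namespace Stmt14Aux

open scoped Matrix.Norms.L2Operator

variable {d : ℕ}

lemma rank_sub_le (A B : Matrix (Fin d) (Fin d) ℂ) : (A - B).rank ≤ A.rank + B.rank := by
  classical
  have hle : LinearMap.range (A - B).mulVecLin ≤
      LinearMap.range A.mulVecLin ⊔ LinearMap.range B.mulVecLin := by
    rintro y ⟨v, rfl⟩
    have h : (A - B).mulVecLin v = A.mulVecLin v - B.mulVecLin v := by
      simp [Matrix.mulVecLin_apply, Matrix.sub_mulVec]
    rw [h]
    exact Submodule.sub_mem _ (Submodule.mem_sup_left ⟨v, rfl⟩)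
      (Submodule.mem_sup_right ⟨v, rfl⟩)
  exact (Submodule.finrank_mono hle).trans
    (Submodule.finrank_add_le_finrank_add_finrank _ _)

lemma rank_vecMulVec_le (w v : Fin d → ℂ) : (Matrix.vecMulVec w v).rank ≤ 1 := by
  rw [Matrix.vecMulVec_eq Unit]
  exact (Matrix.rank_mul_le_left _ _).trans
    ((Matrix.rank_le_card_width _).trans (by simp))

lemma key_herm (W B ρ : Matrix (Fin d) (Fin d) ℂ) (hρ : ρᴴ = ρ) (hB : Bᴴ = -B) :
    (W * (ρ * B - B * ρ) * Wᴴ)ᴴ = W * (ρ * B - B * ρ) * Wᴴ := by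
  simp only [conjTranspose_mul, conjTranspose_sub, conjTranspose_conjTranspose, hρ, hB,
    Matrix.neg_mul, Matrix.mul_neg, sub_neg_eq_add, neg_sub]
  rw [sub_eq_neg_add]
  noncomm_ring

lemma matrix_norm_one_le : ‖(1 : Matrix (Fin d) (Fin d) ℂ)‖ ≤ 1 := by
  rw [Matrix.cstar_norm_def, _root_.map_one, ContinuousLinearMap.one_def]
  exact ContinuousLinearMap.norm_id_le

lemma norm_unitary_le (V : Matrix (Fin d) (Fin d) ℂ) (hV : V ∈ Matrix.unitaryGroup (Fin d) ℂ) :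
    ‖V‖ ≤ 1 := by
  have h1 : Vᴴ * V = 1 := by
    have := (Unitary.mem_iff.mp hV).1
    rwa [Matrix.star_eq_conjTranspose] at this
  have h2 : ‖V‖ * ‖V‖ ≤ 1 := by
    rw [← Matrix.l2_opNorm_conjTranspose_mul_self, h1]
    exact matrix_norm_one_le
  nlinarith [norm_nonneg V]

lemma norm_comm_le (M B : Matrix (Fin d) (Fin d) ℂ) :
    ‖M * B - B * M‖ ≤ 2 * ‖M‖ * ‖B‖ := by
  calc ‖M * B - B * M‖ ≤ ‖M * B‖ + ‖B * M‖ := norm_sub_le _ _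
    _ ≤ ‖M‖ * ‖B‖ + ‖B‖ * ‖M‖ := add_le_add (Matrix.l2_opNorm_mul _ _) (Matrix.l2_opNorm_mul _ _)
    _ = 2 * ‖M‖ * ‖B‖ := by ring

lemma norm_conj_le (W M : Matrix (Fin d) (Fin d) ℂ)
    (hW : W ∈ Matrix.unitaryGroup (Fin d) ℂ) : ‖W * M * Wᴴ‖ ≤ ‖M‖ := by
  have h1 := norm_unitary_le W hW
  have h2 : ‖Wᴴ‖ ≤ 1 := by rw [Matrix.l2_opNorm_conjTranspose]; exact h1
  calc ‖W * M * Wᴴ‖ ≤ ‖W * M‖ * ‖Wᴴ‖ := Matrix.l2_opNorm_mul _ _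
    _ ≤ (‖W‖ * ‖M‖) * ‖Wᴴ‖ :=
        mul_le_mul_of_nonneg_right (Matrix.l2_opNorm_mul _ _) (norm_nonneg _)
    _ ≤ (1 * ‖M‖) * 1 := by gcongr
    _ = ‖M‖ := by ring

lemma norm_rho_le (x : Fin d → ℂ) (hx : star x ⬝ᵥ x = 1) :
    ‖Matrix.vecMulVec x (star x)‖ ≤ 1 := by
  set ρ := Matrix.vecMulVec x (star x) with hρ
  have hxs : ∑ k, star (x k) * x k = 1 := by
    simpa [dotProduct, Pi.star_apply] using hx
  have hρh : ρᴴ = ρ := by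
    ext i j
    simp [hρ, Matrix.vecMulVec_apply, Matrix.conjTranspose_apply, mul_comm]
  have hsq : ρ * ρ = ρ := by
    ext i j
    simp only [hρ, Matrix.mul_apply, Matrix.vecMulVec_apply, Pi.star_apply]
    calc ∑ k, x i * star (x k) * (x k * star (x j))
        = (x i * star (x j)) * ∑ k, star (x k) * x k := by
          rw [Finset.mul_sum]; exact Finset.sum_congr rfl fun k _ => by ring
      _ = x i * star (x j) := by rw [hxs, mul_one]
  have h2 : ‖ρ‖ * ‖ρ‖ = ‖ρ‖ := by
    conv_lhs => rw [← Matrix.l2_opNorm_conjTranspose_mul_self, hρh, hsq]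
  nlinarith [norm_nonneg ρ]

lemma norm_smul_I (M : Matrix (Fin d) (Fin d) ℂ) : ‖Complex.I • M‖ = ‖M‖ := by
  rw [norm_smul, Complex.norm_I, one_mul]

/-! ### Frobenius norm -/

def ecol (M : Matrix (Fin d) (Fin d) ℂ) (j : Fin d) : EuclideanSpace ℂ (Fin d) :=
  (EuclideanSpace.equiv (Fin d) ℂ).symm (fun i => M i j)

def frob (M : Matrix (Fin d) (Fin d) ℂ) : ℝ :=
  Real.sqrt (∑ i, ∑ j, Complex.normSq (M i j))

lemma frob_nonneg (M : Matrix (Fin d) (Fin d) ℂ) : 0 ≤ frob M := Real.sqrt_nonneg _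

lemma sum_normSq_eq (M : Matrix (Fin d) (Fin d) ℂ) :
    ∑ i, ∑ j, Complex.normSq (M i j) = ∑ j, ‖ecol M j‖ ^ 2 := by
  rw [Finset.sum_comm]
  refine Finset.sum_congr rfl fun j _ => ?_
  rw [EuclideanSpace.norm_eq, Real.sq_sqrt (by positivity)]
  refine Finset.sum_congr rfl fun i _ => ?_
  simp [ecol, ← Complex.sq_norm]

lemma frob_conjTranspose (M : Matrix (Fin d) (Fin d) ℂ) : frob Mᴴ = frob M := by
  unfold frob
  rw [Finset.sum_comm]
  congr 1
  exact Finset.sum_congr rfl fun j _ => Finset.sum_congr rfl fun i _ => by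
    simp [Matrix.conjTranspose_apply, Complex.normSq_conj]

lemma frob_sub_le (M N : Matrix (Fin d) (Fin d) ℂ) : frob (M - N) ≤ frob M + frob N := by
  have hnorm : ∀ (P : Matrix (Fin d) (Fin d) ℂ),
      frob P = ‖((WithLp.equiv 2 (Fin d × Fin d → ℂ)).symm
        (fun p => P p.1 p.2) : EuclideanSpace ℂ (Fin d × Fin d))‖ := by
    intro P
    rw [EuclideanSpace.norm_eq, Fintype.sum_prod_type]
    unfold frob
    congr 1
    exact Finset.sum_congr rfl fun i _ => Finset.sum_congr rfl fun j _ => by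
      simp [← Complex.sq_norm]
  rw [hnorm, hnorm, hnorm]
  have h : ((WithLp.equiv 2 (Fin d × Fin d → ℂ)).symm
      (fun p => (M - N) p.1 p.2) : EuclideanSpace ℂ (Fin d × Fin d)) =
      (WithLp.equiv 2 (Fin d × Fin d → ℂ)).symm (fun p => M p.1 p.2) -
      (WithLp.equiv 2 (Fin d × Fin d → ℂ)).symm (fun p => N p.1 p.2) := rfl
  rw [h]
  exact norm_sub_le _ _

lemma frob_mul_left_le (Y X : Matrix (Fin d) (Fin d) ℂ) :
    frob (Y * X) ≤ ‖Y‖ * frob X := by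
  have hb : ∀ j, ‖ecol (Y * X) j‖ ≤ ‖Y‖ * ‖ecol X j‖ := by
    intro j
    have h1 : ecol (Y * X) j =
        (EuclideanSpace.equiv (Fin d) ℂ).symm (Y *ᵥ (ecol X j)) := by
      rfl
    rw [h1]
    exact Matrix.l2_opNorm_mulVec Y (ecol X j)
  rw [frob, frob, sum_normSq_eq, sum_normSq_eq]
  have h1 : ∑ j, ‖ecol (Y * X) j‖ ^ 2 ≤ ∑ j, (‖Y‖ * ‖ecol X j‖) ^ 2 := by
    refine Finset.sum_le_sum fun j _ => ?_
    exact pow_le_pow_left₀ (norm_nonneg _) (hb j) 2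
  calc Real.sqrt (∑ j, ‖ecol (Y * X) j‖ ^ 2)
      ≤ Real.sqrt (∑ j, (‖Y‖ * ‖ecol X j‖) ^ 2) := Real.sqrt_le_sqrt h1
    _ = ‖Y‖ * Real.sqrt (∑ j, ‖ecol X j‖ ^ 2) := by
        simp_rw [mul_pow, ← Finset.mul_sum]
        rw [Real.sqrt_mul (by positivity), Real.sqrt_sq (norm_nonneg _)]

lemma frob_mul_right_le (X Y : Matrix (Fin d) (Fin d) ℂ) :
    frob (X * Y) ≤ frob X * ‖Y‖ := by
  calc frob (X * Y) = frob ((X * Y)ᴴ) := (frob_conjTranspose _).symm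
    _ = frob (Yᴴ * Xᴴ) := by rw [Matrix.conjTranspose_mul]
    _ ≤ ‖Yᴴ‖ * frob Xᴴ := frob_mul_left_le _ _
    _ = frob X * ‖Y‖ := by rw [Matrix.l2_opNorm_conjTranspose, frob_conjTranspose, mul_comm]

lemma frob_conj_le (W M : Matrix (Fin d) (Fin d) ℂ)
    (hW : W ∈ Matrix.unitaryGroup (Fin d) ℂ) : frob (W * M * Wᴴ) ≤ frob M := by
  have h1 := norm_unitary_le W hW
  have h2 : ‖Wᴴ‖ ≤ 1 := by rw [Matrix.l2_opNorm_conjTranspose]; exact h1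
  have h0 := frob_nonneg M
  calc frob (W * M * Wᴴ) ≤ frob (W * M) * ‖Wᴴ‖ := frob_mul_right_le _ _
    _ ≤ (‖W‖ * frob M) * ‖Wᴴ‖ :=
        mul_le_mul_of_nonneg_right (frob_mul_left_le _ _) (norm_nonneg _)
    _ ≤ (1 * frob M) * 1 := by gcongr
    _ = frob M := by ring

lemma frob_comm_le (M B : Matrix (Fin d) (Fin d) ℂ) :
    frob (M * B - B * M) ≤ 2 * frob M * ‖B‖ := by
  calc frob (M * B - B * M) ≤ frob (M * B) + frob (B * M) := frob_sub_le _ _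
    _ ≤ frob M * ‖B‖ + ‖B‖ * frob M :=
        add_le_add (frob_mul_right_le _ _) (frob_mul_left_le _ _)
    _ = 2 * frob M * ‖B‖ := by ring

lemma frob_rho (x : Fin d → ℂ) (hx : star x ⬝ᵥ x = 1) :
    frob (Matrix.vecMulVec x (star x)) = 1 := by
  have hxs : (∑ k, Complex.normSq (x k) : ℝ) = 1 := by
    have h : (↑(∑ k, Complex.normSq (x k)) : ℂ) = 1 := by
      push_cast
      rw [← hx]
      simp [dotProduct, Pi.star_apply, Complex.star_def, mul_comm, Complex.mul_conj]
    exact_mod_cast h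
  unfold frob
  have h : ∑ i, ∑ j, Complex.normSq ((Matrix.vecMulVec x (star x)) i j) = 1 := by
    calc ∑ i, ∑ j, Complex.normSq ((Matrix.vecMulVec x (star x)) i j)
        = ∑ i, ∑ j, Complex.normSq (x i) * Complex.normSq (x j) := by
          exact Finset.sum_congr rfl fun i _ => Finset.sum_congr rfl fun j _ => by
            simp [Matrix.vecMulVec_apply, Complex.normSq_mul, Complex.star_def,
              Complex.normSq_conj]
      _ = (∑ i, Complex.normSq (x i)) * (∑ j, Complex.normSq (x j)) := by
          rw [Finset.sum_mul_sum]
      _ = 1 := by rw [hxs, one_mul]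
  rw [h, Real.sqrt_one]


lemma norm_A_le (Ωμ V' ρ₀ A : Matrix (Fin d) (Fin d) ℂ)
    (hV' : V' ∈ Matrix.unitaryGroup (Fin d) ℂ) (hρ : ‖ρ₀‖ ≤ 1)
    (hA : A = V' * (ρ₀ * (Complex.I • Ωμ) - (Complex.I • Ωμ) * ρ₀) * V'ᴴ) :
    ‖A‖ ≤ 2 * ‖Ωμ‖ := by
  calc ‖A‖ ≤ ‖ρ₀ * (Complex.I • Ωμ) - (Complex.I • Ωμ) * ρ₀‖ := by
        rw [hA]; exact norm_conj_le _ _ hV'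
    _ ≤ 2 * ‖ρ₀‖ * ‖Complex.I • Ωμ‖ := norm_comm_le _ _
    _ = 2 * ‖ρ₀‖ * ‖Ωμ‖ := by rw [norm_smul_I]
    _ ≤ 2 * 1 * ‖Ωμ‖ := by gcongr
    _ = 2 * ‖Ωμ‖ := by ring

lemma clm_opnorm_bound (Ωμ Ων V V' ρ₀ A D : Matrix (Fin d) (Fin d) ℂ)
    (hV : V ∈ Matrix.unitaryGroup (Fin d) ℂ) (hV' : V' ∈ Matrix.unitaryGroup (Fin d) ℂ)
    (x : Fin d → ℂ) (hx : star x ⬝ᵥ x = 1) (hρ₀ : ρ₀ = Matrix.vecMulVec x (star x))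
    (hA : A = V' * (ρ₀ * (Complex.I • Ωμ) - (Complex.I • Ωμ) * ρ₀) * V'ᴴ)
    (hD : D = V * (A * (Complex.I • Ων) - (Complex.I • Ων) * A) * Vᴴ) :
    ‖(Matrix.toEuclideanCLM (𝕜 := ℂ) D :
        EuclideanSpace ℂ (Fin d) →L[ℂ] EuclideanSpace ℂ (Fin d))‖
      ≤ 4 * ‖(Matrix.toEuclideanCLM (𝕜 := ℂ) Ωμ :
          EuclideanSpace ℂ (Fin d) →L[ℂ] EuclideanSpace ℂ (Fin d))‖ *
        ‖(Matrix.toEuclideanCLM (𝕜 := ℂ) Ων :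
          EuclideanSpace ℂ (Fin d) →L[ℂ] EuclideanSpace ℂ (Fin d))‖ := by
  rw [← Matrix.cstar_norm_def, ← Matrix.cstar_norm_def, ← Matrix.cstar_norm_def]
  have hρ : ‖ρ₀‖ ≤ 1 := by rw [hρ₀]; exact norm_rho_le x hx
  have hAn : ‖A‖ ≤ 2 * ‖Ωμ‖ := norm_A_le Ωμ V' ρ₀ A hV' hρ hA
  calc ‖D‖ ≤ ‖A * (Complex.I • Ων) - (Complex.I • Ων) * A‖ := by
        rw [hD]; exact norm_conj_le _ _ hV
    _ ≤ 2 * ‖A‖ * ‖Complex.I • Ων‖ := norm_comm_le _ _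
    _ = 2 * ‖A‖ * ‖Ων‖ := by rw [norm_smul_I]
    _ ≤ 2 * (2 * ‖Ωμ‖) * ‖Ων‖ := by gcongr
    _ = 4 * ‖Ωμ‖ * ‖Ων‖ := by ring

lemma frob_A_le (Ωμ V' ρ₀ A : Matrix (Fin d) (Fin d) ℂ)
    (hV' : V' ∈ Matrix.unitaryGroup (Fin d) ℂ) (hρ : frob ρ₀ ≤ 1)
    (hA : A = V' * (ρ₀ * (Complex.I • Ωμ) - (Complex.I • Ωμ) * ρ₀) * V'ᴴ) :
    frob A ≤ 2 * ‖Ωμ‖ := by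
  calc frob A ≤ frob (ρ₀ * (Complex.I • Ωμ) - (Complex.I • Ωμ) * ρ₀) := by
        rw [hA]; exact frob_conj_le _ _ hV'
    _ ≤ 2 * frob ρ₀ * ‖Complex.I • Ωμ‖ := frob_comm_le _ _
    _ = 2 * frob ρ₀ * ‖Ωμ‖ := by rw [norm_smul_I]
    _ ≤ 2 * 1 * ‖Ωμ‖ := by gcongr
    _ = 2 * ‖Ωμ‖ := by ring

lemma clm_frob_bound (Ωμ Ων V V' ρ₀ A D : Matrix (Fin d) (Fin d) ℂ)
    (hV : V ∈ Matrix.unitaryGroup (Fin d) ℂ) (hV' : V' ∈ Matrix.unitaryGroup (Fin d) ℂ)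
    (x : Fin d → ℂ) (hx : star x ⬝ᵥ x = 1) (hρ₀ : ρ₀ = Matrix.vecMulVec x (star x))
    (hA : A = V' * (ρ₀ * (Complex.I • Ωμ) - (Complex.I • Ωμ) * ρ₀) * V'ᴴ)
    (hD : D = V * (A * (Complex.I • Ων) - (Complex.I • Ων) * A) * Vᴴ) :
    Real.sqrt (∑ i, ∑ j, Complex.normSq (D i j))
      ≤ 8 * ‖(Matrix.toEuclideanCLM (𝕜 := ℂ) Ωμ :
          EuclideanSpace ℂ (Fin d) →L[ℂ] EuclideanSpace ℂ (Fin d))‖ *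
        ‖(Matrix.toEuclideanCLM (𝕜 := ℂ) Ων :
          EuclideanSpace ℂ (Fin d) →L[ℂ] EuclideanSpace ℂ (Fin d))‖ := by
  rw [← Matrix.cstar_norm_def, ← Matrix.cstar_norm_def]
  have hρ : frob ρ₀ ≤ 1 := by rw [hρ₀, frob_rho x hx]
  have hAn : frob A ≤ 2 * ‖Ωμ‖ := frob_A_le Ωμ V' ρ₀ A hV' hρ hA
  have h4 : frob D ≤ 4 * ‖Ωμ‖ * ‖Ων‖ := by
    calc frob D ≤ frob (A * (Complex.I • Ων) - (Complex.I • Ων) * A) := by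
          rw [hD]; exact frob_conj_le _ _ hV
      _ ≤ 2 * frob A * ‖Complex.I • Ων‖ := frob_comm_le _ _
      _ = 2 * frob A * ‖Ων‖ := by rw [norm_smul_I]
      _ ≤ 2 * (2 * ‖Ωμ‖) * ‖Ων‖ := by gcongr
      _ = 4 * ‖Ωμ‖ * ‖Ων‖ := by ring
  have h8 : (4 : ℝ) * ‖Ωμ‖ * ‖Ων‖ ≤ 8 * ‖Ωμ‖ * ‖Ων‖ := by
    nlinarith [norm_nonneg Ωμ, norm_nonneg Ων]
  exact le_trans h4 h8

end Stmt14Aux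

/-- **Properties of the second derivative `D_{μν}` of the output density matrix.**
For `μ ≤ ν`, `D_{μν} = ∂_μ∂_ν(|ψ(θ)⟩⟨ψ(θ)|)` can be written as a nested commutator
`D = V [V' [ρ₀, iΩ_μ] V'†, iΩ_ν] V†` with `V, V'` unitary and `ρ₀ = |x⟩⟨x|` a rank-one
density matrix. Then `D` is traceless Hermitian of rank at most `4`, its operator norm
is at most `4‖Ω_μ‖_∞‖Ω_ν‖_∞`, and its Frobenius norm is at most `8‖Ω_μ‖_∞‖Ω_ν‖_∞`. -/
theorem stmt14 (d : ℕ)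
    (Ωμ Ων : Matrix (Fin d) (Fin d) ℂ) (hΩμ : Ωμ.IsHermitian) (hΩν : Ων.IsHermitian)
    (V V' : Matrix (Fin d) (Fin d) ℂ)
    (hV : V ∈ Matrix.unitaryGroup (Fin d) ℂ) (hV' : V' ∈ Matrix.unitaryGroup (Fin d) ℂ)
    (x : Fin d → ℂ) (hx : star x ⬝ᵥ x = 1)
    (ρ₀ : Matrix (Fin d) (Fin d) ℂ) (hρ₀ : ρ₀ = Matrix.vecMulVec x (star x))
    (A D : Matrix (Fin d) (Fin d) ℂ)
    (hA : A = V' * (ρ₀ * (Complex.I • Ωμ) - (Complex.I • Ωμ) * ρ₀) * V'ᴴ)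
    (hD : D = V * (A * (Complex.I • Ων) - (Complex.I • Ων) * A) * Vᴴ) :
    D.IsHermitian ∧ D.trace = 0 ∧ D.rank ≤ 4 ∧
    ‖(Matrix.toEuclideanCLM (𝕜 := ℂ) D :
        EuclideanSpace ℂ (Fin d) →L[ℂ] EuclideanSpace ℂ (Fin d))‖
      ≤ 4 * ‖(Matrix.toEuclideanCLM (𝕜 := ℂ) Ωμ :
          EuclideanSpace ℂ (Fin d) →L[ℂ] EuclideanSpace ℂ (Fin d))‖ *
        ‖(Matrix.toEuclideanCLM (𝕜 := ℂ) Ων :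
          EuclideanSpace ℂ (Fin d) →L[ℂ] EuclideanSpace ℂ (Fin d))‖ ∧
    Real.sqrt (∑ i, ∑ j, Complex.normSq (D i j))
      ≤ 8 * ‖(Matrix.toEuclideanCLM (𝕜 := ℂ) Ωμ :
          EuclideanSpace ℂ (Fin d) →L[ℂ] EuclideanSpace ℂ (Fin d))‖ *
        ‖(Matrix.toEuclideanCLM (𝕜 := ℂ) Ων :
          EuclideanSpace ℂ (Fin d) →L[ℂ] EuclideanSpace ℂ (Fin d))‖ := by
  have hρh : ρ₀ᴴ = ρ₀ := by
    rw [hρ₀]; ext i j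
    simp [Matrix.vecMulVec_apply, Matrix.conjTranspose_apply, mul_comm]
  have hBμ : (Complex.I • Ωμ)ᴴ = -(Complex.I • Ωμ) := by
    rw [Matrix.conjTranspose_smul, hΩμ.eq]
    simp [Complex.star_def, Complex.conj_I, neg_smul]
  have hBν : (Complex.I • Ων)ᴴ = -(Complex.I • Ων) := by
    rw [Matrix.conjTranspose_smul, hΩν.eq]
    simp [Complex.star_def, Complex.conj_I, neg_smul]
  have hAh : A.IsHermitian := by
    rw [Matrix.IsHermitian, hA]; exact Stmt14Aux.key_herm _ _ _ hρh hBμ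
  have hDh : D.IsHermitian := by
    rw [Matrix.IsHermitian, hD]; exact Stmt14Aux.key_herm _ _ _ hAh.eq hBν
  have hVV : Vᴴ * V = 1 := by
    have h := (Unitary.mem_iff.mp hV).1
    rwa [Matrix.star_eq_conjTranspose] at h
  have htr : D.trace = 0 := by
    rw [hD, Matrix.trace_mul_cycle, hVV, Matrix.one_mul,
      Matrix.trace_sub, Matrix.trace_mul_comm, sub_self]
  have hρr : ρ₀.rank ≤ 1 := by rw [hρ₀]; exact Stmt14Aux.rank_vecMulVec_le x (star x)
  have hAr : A.rank ≤ 2 := by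
    rw [hA]
    refine le_trans ((Matrix.rank_mul_le_left _ _).trans (Matrix.rank_mul_le_right _ _)) ?_
    refine le_trans (Stmt14Aux.rank_sub_le _ _) ?_
    have h1 := (Matrix.rank_mul_le_left ρ₀ (Complex.I • Ωμ)).trans hρr
    have h2 := (Matrix.rank_mul_le_right (Complex.I • Ωμ) ρ₀).trans hρr
    omega
  have hDr : D.rank ≤ 4 := by
    rw [hD]
    refine le_trans ((Matrix.rank_mul_le_left _ _).trans (Matrix.rank_mul_le_right _ _)) ?_
    refine le_trans (Stmt14Aux.rank_sub_le _ _) ?_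
    have h1 := (Matrix.rank_mul_le_left A (Complex.I • Ων)).trans hAr
    have h2 := (Matrix.rank_mul_le_right (Complex.I • Ων) A).trans hAr
    omega
  exact ⟨hDh, htr, hDr,
    Stmt14Aux.clm_opnorm_bound Ωμ Ων V V' ρ₀ A D hV hV' x hx hρ₀ hA hD,
    Stmt14Aux.clm_frob_bound Ωμ Ων V V' ρ₀ A D hV hV' x hx hρ₀ hA hD⟩
end
end
end

section
/- Let H be a Hermitian operator on a d-dimensional Hilbert space and |ψ⟩ a unit vector. Then tr(H²) − 2⟨ψ|H²|ψ⟩ + ⟨ψ|H|ψ⟩² ≥ 0. -/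
open Matrix Complex

noncomputable section

/-- For a Hermitian operator `H` on a `d`-dimensional Hilbert space and a unit vector
`ψ`, one has `tr(H²) − 2⟨ψ|H²|ψ⟩ + ⟨ψ|H|ψ⟩² ≥ 0`. -/
theorem stmt17 (d : ℕ) (H : Matrix (Fin d) (Fin d) ℂ) (hH : H.IsHermitian)
    (ψ : Fin d → ℂ) (hψ : star ψ ⬝ᵥ ψ = 1) :
    0 ≤ ((H * H).trace).re - 2 * (star ψ ⬝ᵥ (H * H).mulVec ψ).re
        + ((star ψ ⬝ᵥ H.mulVec ψ).re) ^ 2 := by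
  set P : Matrix (Fin d) (Fin d) ℂ := vecMulVec ψ (star ψ) with hPdef
  set a : ℂ := star ψ ⬝ᵥ H.mulVec ψ with ha
  set b : ℂ := star ψ ⬝ᵥ (H * H).mulVec ψ with hb
  -- a is real
  have haR : star a = a := by
    rw [ha, ← star_dotProduct_star, star_star, star_mulVec, ← dotProduct_mulVec, hH.eq]
  -- trace of P * A
  have htPA : ∀ A : Matrix (Fin d) (Fin d) ℂ, (P * A).trace = star ψ ⬝ᵥ A.mulVec ψ := by
    intro A
    simp only [hPdef, trace, diag, mul_apply, vecMulVec_apply, dotProduct, mulVec, Pi.star_apply,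
      Finset.mul_sum]
    rw [Finset.sum_comm]
    congr 1; ext j; congr 1; ext i; ring
  have hP2 : P * P = P := by
    ext i j
    simp only [hPdef, mul_apply, vecMulVec_apply, Pi.star_apply]
    have e : ∑ k, ψ i * star (ψ k) * (ψ k * star (ψ j))
        = (∑ k, star (ψ k) * ψ k) * (ψ i * star (ψ j)) := by
      rw [Finset.sum_mul]; congr 1; ext k; ring
    rw [e, show (∑ k, star (ψ k) * ψ k) = 1 from hψ, one_mul]
  have hPHP : P * H * P = a • P := by
    ext i j
    simp only [hPdef, mul_apply, vecMulVec_apply, Pi.star_apply, Matrix.smul_apply, smul_eq_mul, ha,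
      dotProduct, mulVec, Finset.mul_sum, Finset.sum_mul]
    rw [Finset.sum_comm]
    congr 1; ext k; congr 1; ext l; ring
  set Q : Matrix (Fin d) (Fin d) ℂ := 1 - P with hQdef
  have hQ2 : Q * Q = Q := by
    rw [hQdef]
    have : (1 - P) * (1 - P) = 1 - P - P + P * P := by noncomm_ring
    rw [this, hP2]; noncomm_ring
  set M : Matrix (Fin d) (Fin d) ℂ := Q * H * Q with hMdef
  have hPHerm : P.IsHermitian := by
    ext i j
    simp [hPdef, conjTranspose_apply, vecMulVec_apply, mul_comm]
  have hMH : M.IsHermitian := by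
    have hQH : Q.IsHermitian := (isHermitian_one).sub hPHerm
    show Mᴴ = M
    rw [hMdef, conjTranspose_mul, conjTranspose_mul, hQH.eq, hH.eq, mul_assoc]
  -- key trace identity
  have key : (M * M).trace = (H * H).trace - 2 * b + a ^ 2 := by
    have e1 : M * M = Q * (H * Q * H * Q) := by
      rw [hMdef]
      calc Q * H * Q * (Q * H * Q) = Q * H * (Q * Q) * H * Q := by noncomm_ring
        _ = Q * (H * Q * H * Q) := by rw [hQ2]; noncomm_ring
    rw [e1, trace_mul_comm, mul_assoc, hQ2]
    have e3 : H * Q * H * Q = H * H - H * P * H - H * H * P + H * P * H * P := by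
      rw [hQdef]; noncomm_ring
    rw [e3]
    have t1 : (H * P * H).trace = b := by
      rw [trace_mul_comm, ← mul_assoc, trace_mul_comm, htPA, hb]
    have t2 : (H * H * P).trace = b := by
      rw [trace_mul_comm, htPA, hb]
    have t3 : (H * P * H * P).trace = a ^ 2 := by
      rw [trace_mul_comm, ← mul_assoc, ← mul_assoc, hPHP, smul_mul_assoc, trace_smul,
        htPA, ← ha, smul_eq_mul, sq]
    rw [trace_add, trace_sub, trace_sub, t1, t2, t3]
    ring
  -- nonnegativity of trace (M * M)
  have hnn : 0 ≤ ((M * M).trace).re := by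
    rw [show M * M = Mᴴ * M by rw [hMH.eq]]
    have : ((Mᴴ * M).trace).re = ∑ j, ∑ i, Complex.normSq (M i j) := by
      simp only [trace, diag, mul_apply, conjTranspose_apply, Complex.normSq_eq_conj_mul_self]
      rw [Complex.re_sum]
      congr 1; ext j
      rw [Complex.re_sum]
      simp [Complex.normSq_apply]
    rw [this]
    refine Finset.sum_nonneg fun j _ => Finset.sum_nonneg fun i _ => Complex.normSq_nonneg _
  -- conclude
  have haim : a.im = 0 := by
    have h := congrArg Complex.im haR
    simp only [Complex.star_def, Complex.conj_im] at h
    linarith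
  have := key ▸ hnn
  have hre : ((H * H).trace - 2 * b + a ^ 2).re
      = ((H * H).trace).re - 2 * b.re + a.re ^ 2 := by
    simp [Complex.add_re, Complex.sub_re, Complex.mul_re, sq, haim]
  rw [hre] at this
  exact this
end
end

section
/- With the ensemble V of diagonalizing unitaries fixing |ψ*⟩ (V = |ψ*⟩⟨ψ*| + P W P with W Haar-random on the orthogonal complement P of |ψ*⟩), the local loss L(θ) = ⟨ψ(θ)|V†HV|ψ(θ)⟩ satisfies E_V[∇L at θ*] = 0 and Var_V[∂_μ L at θ*] = ((⟨H²⟩_* − ⟨H⟩_*²)/(d−1)) F_μμ*, where ⟨·⟩_* = ⟨ψ*|·|ψ*⟩ and F* is the QFI matrix at θ*. -/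
open MeasureTheory Matrix Complex

noncomputable section

namespace Stmt19Aux

variable {d : ℕ}

lemma dot_hasDerivAt (A : Matrix (Fin d) (Fin d) ℂ) (ψ : ℝ → Fin d → ℂ) (t : ℝ)
    (h : DifferentiableAt ℝ ψ t) :
    HasDerivAt (fun s => star (ψ s) ⬝ᵥ A.mulVec (ψ s))
      (star (deriv ψ t) ⬝ᵥ A.mulVec (ψ t) + star (ψ t) ⬝ᵥ A.mulVec (deriv ψ t)) t := by
  have hψ : HasDerivAt ψ (deriv ψ t) t := h.hasDerivAt
  have hc : ∀ i, HasDerivAt (fun s => ψ s i) (deriv ψ t i) t := fun i => hasDerivAt_pi.1 hψ i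
  have hsum : HasDerivAt (fun s => ∑ i, ∑ j, star (ψ s i) * (A i j * ψ s j))
      (∑ i, ∑ j, (star (deriv ψ t i) * (A i j * ψ t j)
        + star (ψ t i) * (A i j * deriv ψ t j))) t := by
    apply HasDerivAt.fun_sum; intro i _
    apply HasDerivAt.fun_sum; intro j _
    exact (hc i).star.mul ((hc j).const_mul (A i j))
  have hfun : (fun s => star (ψ s) ⬝ᵥ A.mulVec (ψ s))
      = fun s => ∑ i, ∑ j, star (ψ s i) * (A i j * ψ s j) := by
    funext s; simp [dotProduct, mulVec, Finset.mul_sum]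
  have hval : star (deriv ψ t) ⬝ᵥ A.mulVec (ψ t) + star (ψ t) ⬝ᵥ A.mulVec (deriv ψ t)
      = ∑ i, ∑ j, (star (deriv ψ t i) * (A i j * ψ t j)
        + star (ψ t i) * (A i j * deriv ψ t j)) := by
    simp [dotProduct, mulVec, Finset.mul_sum, Finset.sum_add_distrib]
  rw [hfun, hval]; exact hsum

lemma meas_entry (i j : Fin d) :
    Measurable (fun V : Matrix.unitaryGroup (Fin d) ℂ => (V : Matrix (Fin d) (Fin d) ℂ) i j) :=
  ((measurable_pi_apply j).comp ((measurable_pi_apply i).comp measurable_subtype_coe))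

lemma meas_mulVec (φ : Fin d → ℂ) (i : Fin d) :
    Measurable (fun V : Matrix.unitaryGroup (Fin d) ℂ =>
      (V : Matrix (Fin d) (Fin d) ℂ).mulVec φ i) := by
  simp only [mulVec, dotProduct]
  exact Finset.measurable_sum _ (fun j _ => (meas_entry i j).mul measurable_const)

lemma entry_bound (V : Matrix.unitaryGroup (Fin d) ℂ) (i j : Fin d) :
    ‖(V : Matrix (Fin d) (Fin d) ℂ) i j‖ ≤ 1 := by
  have h := V.2.1
  have h2 : (star (V : Matrix (Fin d) (Fin d) ℂ) * (V : Matrix (Fin d) (Fin d) ℂ)) j j = 1 := by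
    rw [h]; simp
  rw [Matrix.mul_apply] at h2
  have h3 : ∑ k, Complex.normSq ((V : Matrix (Fin d) (Fin d) ℂ) k j) = 1 := by
    have := congrArg Complex.re h2
    simpa [Matrix.star_apply, Complex.normSq_eq_conj_mul_self, Complex.normSq_apply] using this
  have h4 : Complex.normSq ((V : Matrix (Fin d) (Fin d) ℂ) i j) ≤ 1 := by
    rw [← h3]
    exact Finset.single_le_sum (f := fun k => Complex.normSq ((V : Matrix (Fin d) (Fin d) ℂ) k j))
      (fun k _ => Complex.normSq_nonneg _) (Finset.mem_univ i)
  have h5 : ‖(V : Matrix (Fin d) (Fin d) ℂ) i j‖ ^ 2 ≤ 1 := by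
    rw [Complex.sq_norm]; exact h4
  nlinarith [norm_nonneg ((V : Matrix (Fin d) (Fin d) ℂ) i j)]

lemma mulVec_bound (φ : Fin d → ℂ) (V : Matrix.unitaryGroup (Fin d) ℂ) (i : Fin d) :
    ‖(V : Matrix (Fin d) (Fin d) ℂ).mulVec φ i‖ ≤ ∑ j, ‖φ j‖ := by
  calc ‖∑ j, (V : Matrix (Fin d) (Fin d) ℂ) i j * φ j‖
      ≤ ∑ j, ‖(V : Matrix (Fin d) (Fin d) ℂ) i j * φ j‖ := norm_sum_le _ _
    _ ≤ ∑ j, ‖φ j‖ := by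
        apply Finset.sum_le_sum
        intro j _
        rw [norm_mul]
        calc ‖(V : Matrix (Fin d) (Fin d) ℂ) i j‖ * ‖φ j‖ ≤ 1 * ‖φ j‖ :=
            mul_le_mul_of_nonneg_right (entry_bound V i j) (norm_nonneg _)
          _ = ‖φ j‖ := one_mul _

lemma meas_mul_left (U : Matrix.unitaryGroup (Fin d) ℂ) :
    Measurable (fun V : Matrix.unitaryGroup (Fin d) ℂ => U * V) := by
  have hcoe : Measurable (fun V : Matrix.unitaryGroup (Fin d) ℂ =>
      (U : Matrix (Fin d) (Fin d) ℂ) * (V : Matrix (Fin d) (Fin d) ℂ)) := by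
    apply measurable_pi_lambda; intro i
    apply measurable_pi_lambda; intro j
    simp only [Matrix.mul_apply]
    exact Finset.measurable_sum _ (fun k _ => (meas_entry k j).const_mul _)
  exact Measurable.subtype_mk hcoe (h := fun V => (U * V).2)

lemma integral_inv (μ : Measure (Matrix.unitaryGroup (Fin d) ℂ))
    (U : Matrix.unitaryGroup (Fin d) ℂ)
    (hmap : μ.map (fun V => U * V) = μ) {E : Type*} [NormedAddCommGroup E] [NormedSpace ℝ E]
    (h : Matrix.unitaryGroup (Fin d) ℂ → E) (hm : AEStronglyMeasurable h μ) :
    ∫ V, h V ∂μ = ∫ V, h (U * V) ∂μ := by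
  conv_lhs => rw [← hmap]
  exact integral_map (meas_mul_left U).aemeasurable (by rw [hmap]; exact hm)

lemma vecMulVec_mulVec' (v w x : Fin d → ℂ) :
    (vecMulVec v w).mulVec x = (w ⬝ᵥ x) • v := by
  funext i
  simp only [mulVec, dotProduct, vecMulVec_apply, Pi.smul_apply, smul_eq_mul, Finset.sum_mul]
  apply Finset.sum_congr rfl
  intro j _
  ring

lemma self_dot (v : Fin d → ℂ) :
    star v ⬝ᵥ v = ((∑ i, Complex.normSq (v i) : ℝ) : ℂ) := by
  rw [dotProduct]
  push_cast
  apply Finset.sum_congr rfl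
  intro i _
  rw [Pi.star_apply, Complex.star_def, ← Complex.normSq_eq_conj_mul_self]

lemma self_dot_pos (v : Fin d → ℂ) (hv : v ≠ 0) :
    0 < ∑ i, Complex.normSq (v i) := by
  have h1 : ∃ i, v i ≠ 0 := by
    by_contra h
    push_neg at h
    exact hv (funext h)
  obtain ⟨i, hi⟩ := h1
  have : 0 < Complex.normSq (v i) := Complex.normSq_pos.2 hi
  exact lt_of_lt_of_le this (Finset.single_le_sum
    (f := fun k => Complex.normSq (v k)) (fun k _ => Complex.normSq_nonneg _) (Finset.mem_univ i))

lemma normalize_vec (ψs : Fin d → ℂ) (v : Fin d → ℂ) (hperp : star ψs ⬝ᵥ v = 0) (hv : v ≠ 0) :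
    ∃ (u : Fin d → ℂ) (r : ℝ), 0 < r ∧ v = (r : ℂ) • u ∧ star ψs ⬝ᵥ u = 0 ∧
      star u ⬝ᵥ u = 1 := by
  set s : ℝ := ∑ i, Complex.normSq (v i) with hs
  have hspos : 0 < s := self_dot_pos v hv
  have hr : 0 < Real.sqrt s := Real.sqrt_pos.2 hspos
  refine ⟨((Real.sqrt s : ℂ))⁻¹ • v, Real.sqrt s, hr, ?_, ?_, ?_⟩
  · rw [smul_smul]
    rw [mul_inv_cancel₀ (by exact_mod_cast hr.ne'), one_smul]
  · rw [dotProduct_smul, hperp, smul_zero]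
  · have : star (((Real.sqrt s : ℂ))⁻¹ • v) = ((Real.sqrt s : ℂ))⁻¹ • star v := by
      funext i
      simp [star_smul, Complex.conj_ofReal]
    rw [this, smul_dotProduct, dotProduct_smul, self_dot, ← hs, smul_eq_mul, smul_eq_mul]
    rw [← mul_assoc, ← mul_inv]
    norm_cast
    rw [Real.mul_self_sqrt hspos.le]
    rw [inv_mul_cancel₀ (by exact_mod_cast hspos.ne')]

end Stmt19Aux
set_option maxHeartbeats 2000000 in
/-- **Gradient statistics of the local (energy) loss over the diagonalizing-unitary
ensemble.** `ψ : ℝ → ℂ^d` is a differentiable family of unit vectors (variation along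
the `μ`-th coordinate), `ψs = ψ t*`, and `V = |ψs⟩⟨ψs| + P W P` with `W` Haar-random on
the orthogonal complement `P` of `ψs` (so every `V` in the ensemble fixes `ψs`). For the
local loss `L(V, t) = ⟨ψ(t)|V† H V|ψ(t)⟩` with `H` Hermitian, `E[∂L at t*] = 0` and
`Var[∂L at t*] = ((⟨H²⟩* − ⟨H⟩*²)/(d−1)) F`, where `⟨·⟩* = ⟨ψs|·|ψs⟩` and
`F` is the diagonal QFI element at `t*`. -/
theorem stmt19 (d : ℕ) (hd : 2 ≤ d)
    (tstar : ℝ) (ψ : ℝ → Fin d → ℂ)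
    (hψdiff : DifferentiableAt ℝ ψ tstar)
    (hψunit : ∀ t, star (ψ t) ⬝ᵥ ψ t = 1)
    (ψs : Fin d → ℂ) (hψs : ψs = ψ tstar)
    (P : Matrix (Fin d) (Fin d) ℂ)
    (hPdef : P = 1 - Matrix.vecMulVec ψs (star ψs))
    (μ : Measure (Matrix.unitaryGroup (Fin d) ℂ)) [IsProbabilityMeasure μ]
    (hsupp : ∀ᵐ (V : Matrix.unitaryGroup (Fin d) ℂ) ∂μ,
      (V : Matrix (Fin d) (Fin d) ℂ) * (1 - P) = 1 - P ∧
      (1 - P) * (V : Matrix (Fin d) (Fin d) ℂ) = 1 - P)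
    (hinv : ∀ U : Matrix.unitaryGroup (Fin d) ℂ,
      (U : Matrix (Fin d) (Fin d) ℂ) * (1 - P) = 1 - P →
      (1 - P) * (U : Matrix (Fin d) (Fin d) ℂ) = 1 - P →
      μ.map (fun V => U * V) = μ)
    (H : Matrix (Fin d) (Fin d) ℂ) (hH : H.IsHermitian)
    (L : Matrix.unitaryGroup (Fin d) ℂ → ℝ → ℝ)
    (hL : ∀ (V : Matrix.unitaryGroup (Fin d) ℂ) (t : ℝ),
      L V t = (star (ψ t) ⬝ᵥ
        (((V : Matrix (Fin d) (Fin d) ℂ))ᴴ * H * (V : Matrix (Fin d) (Fin d) ℂ)).mulVec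
          (ψ t)).re)
    (F : ℝ)
    (hF : F = 2 * ((star (deriv ψ tstar) ⬝ᵥ deriv ψ tstar).re
      - Complex.normSq (star (deriv ψ tstar) ⬝ᵥ ψs))) :
    (∫ V, deriv (L V) tstar ∂μ) = 0 ∧
    (∫ V, (deriv (L V) tstar - ∫ W, deriv (L W) tstar ∂μ) ^ 2 ∂μ)
      = (((star ψs ⬝ᵥ (H * H).mulVec ψs).re - ((star ψs ⬝ᵥ H.mulVec ψs).re) ^ 2)
          / ((d : ℝ) - 1)) * F := by
  classical
  set ψ' : Fin d → ℂ := deriv ψ tstar with hψ'def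
  set Q : Matrix (Fin d) (Fin d) ℂ := vecMulVec ψs (star ψs) with hQdef
  have hQP : (1 : Matrix (Fin d) (Fin d) ℂ) - P = Q := by rw [hPdef]; exact sub_sub_cancel 1 Q
  have hψs1 : star ψs ⬝ᵥ ψs = 1 := by rw [hψs]; exact hψunit tstar
  have hψs1' : ∑ i, star (ψs i) * ψs i = 1 := hψs1
  have hQmul : ∀ x, Q.mulVec x = (star ψs ⬝ᵥ x) • ψs := fun x =>
    Stmt19Aux.vecMulVec_mulVec' _ _ _
  have hPmul : ∀ x, P.mulVec x = x - (star ψs ⬝ᵥ x) • ψs := by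
    intro x
    rw [hPdef, sub_mulVec, one_mulVec, hQmul]
  have hPorth : ∀ x, star ψs ⬝ᵥ P.mulVec x = 0 := by
    intro x
    rw [hPmul, dotProduct_sub, dotProduct_smul, hψs1, smul_eq_mul, mul_one, sub_self]
  -- Q algebra
  have hQQ : Q * Q = Q := by
    ext i j
    rw [Matrix.mul_apply]
    simp only [hQdef, vecMulVec_apply]
    calc ∑ k, ψs i * star (ψs k) * (ψs k * star (ψs j))
        = (∑ k, star (ψs k) * ψs k) * (ψs i * star (ψs j)) := by
          rw [Finset.sum_mul]
          exact Finset.sum_congr rfl (fun k _ => by ring)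
      _ = ψs i * star (ψs j) := by rw [hψs1', one_mul]
  have hQH : Qᴴ = Q := by
    ext i j
    rw [conjTranspose_apply]
    simp [hQdef, vecMulVec_apply, mul_comm]
  have hψV : ∀ V : Matrix.unitaryGroup (Fin d) ℂ,
      Q * (V : Matrix (Fin d) (Fin d) ℂ) = Q →
      vecMul (star ψs) (V : Matrix (Fin d) (Fin d) ℂ) = star ψs := by
    intro V h
    have h0 : vecMul (star ψs) Q = star ψs := by
      funext j
      simp only [hQdef, vecMul, dotProduct, vecMulVec_apply, Pi.star_apply]
      calc ∑ i, star (ψs i) * (ψs i * star (ψs j))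
          = (∑ i, star (ψs i) * ψs i) * star (ψs j) := by
            rw [Finset.sum_mul]
            exact Finset.sum_congr rfl (fun i _ => by ring)
        _ = star (ψs j) := by rw [hψs1', one_mul]
    calc vecMul (star ψs) (V : Matrix (Fin d) (Fin d) ℂ)
        = vecMul (vecMul (star ψs) Q) (V : Matrix (Fin d) (Fin d) ℂ) := by rw [h0]
      _ = vecMul (star ψs) (Q * (V : Matrix (Fin d) (Fin d) ℂ)) := by rw [vecMul_vecMul]
      _ = star ψs := by rw [h, h0]
  have hVψ : ∀ V : Matrix.unitaryGroup (Fin d) ℂ,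
      (V : Matrix (Fin d) (Fin d) ℂ) * Q = Q →
      (V : Matrix (Fin d) (Fin d) ℂ).mulVec ψs = ψs := by
    intro V h
    have h0 : Q.mulVec ψs = ψs := by rw [hQmul, hψs1, one_smul]
    calc (V : Matrix (Fin d) (Fin d) ℂ).mulVec ψs
        = (V : Matrix (Fin d) (Fin d) ℂ).mulVec (Q.mulVec ψs) := by rw [h0]
      _ = ((V : Matrix (Fin d) (Fin d) ℂ) * Q).mulVec ψs := by rw [mulVec_mulVec]
      _ = ψs := by rw [h, h0]
  have hsupp' : ∀ᵐ (V : Matrix.unitaryGroup (Fin d) ℂ) ∂μ, (V : Matrix (Fin d) (Fin d) ℂ) * Q = Q ∧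
      Q * (V : Matrix (Fin d) (Fin d) ℂ) = Q := by
    filter_upwards [hsupp] with V hV
    rw [← hQP]
    exact hV
  -- the vectors
  set φ : Fin d → ℂ := P.mulVec ψ' with hφdef
  have hφperp : star ψs ⬝ᵥ φ = 0 := hPorth ψ'
  set b : Fin d → ℂ := H.mulVec ψs with hbdef
  set β : ℂ := star ψs ⬝ᵥ b with hβdef
  have hstarb : vecMul (star ψs) H = star b := by
    rw [hbdef, star_mulVec, hH.eq]
  have hba : star b ⬝ᵥ ψs = β := by
    rw [← hstarb, ← dotProduct_mulVec, ← hbdef, ← hβdef]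
  have hβreal : star β = β := by
    conv_lhs => rw [hβdef, star_dotProduct]
    rw [star_star, hba]
  have hβim : β.im = 0 := by
    have := congrArg Complex.im hβreal
    simp only [Complex.star_def, Complex.conj_im] at this
    linarith
  set a : Fin d → ℂ := b - β • ψs with hadef
  have haperp : star ψs ⬝ᵥ a = 0 := by
    rw [hadef, dotProduct_sub, dotProduct_smul, hψs1, smul_eq_mul, mul_one, ← hβdef, sub_self]
  have hstara : star a = star b - β • star ψs := by
    rw [hadef, star_sub, star_smul, hβreal]
  -- norm-conservation consequence
  set c0 : ℂ := star ψs ⬝ᵥ ψ' with hc0def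
  have hc0 : c0 + star c0 = 0 := by
    have h1 := Stmt19Aux.dot_hasDerivAt 1 ψ tstar hψdiff
    have h2 : (fun s => star (ψ s) ⬝ᵥ (1 : Matrix (Fin d) (Fin d) ℂ).mulVec (ψ s))
        = fun _ => (1 : ℂ) := by
      funext s; rw [one_mulVec]; exact hψunit s
    rw [h2] at h1
    have h3 := h1.unique (hasDerivAt_const tstar 1)
    rw [one_mulVec, one_mulVec, ← hψs, ← hψ'def] at h3
    rw [star_dotProduct] at h3
    rw [hc0def]
    linear_combination h3
  have hc0re : c0.re = 0 := by
    have := congrArg Complex.re hc0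
    simp only [Complex.add_re, Complex.star_def, Complex.conj_re, Complex.zero_re] at this
    linarith
  -- z and g
  set z : Matrix.unitaryGroup (Fin d) ℂ → ℂ :=
    fun V => star a ⬝ᵥ (V : Matrix (Fin d) (Fin d) ℂ).mulVec φ with hzdef
  set g : Matrix.unitaryGroup (Fin d) ℂ → ℝ := fun V => 2 * (z V).re with hgdef
  have hmeasz : Measurable z := by
    rw [hzdef]
    simp only [dotProduct]
    exact Finset.measurable_sum _ (fun i _ => (Stmt19Aux.meas_mulVec φ i).const_mul _)
  have hmeasg : Measurable g := (Complex.measurable_re.comp hmeasz).const_mul 2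
  -- pointwise a.e. identity for the derivative
  have hae : ∀ᵐ (V : Matrix.unitaryGroup (Fin d) ℂ) ∂μ, deriv (L V) tstar = g V := by
    filter_upwards [hsupp'] with V hV
    obtain ⟨hV1, hV2⟩ := hV
    have hVψs := hVψ V hV1
    have hψsV := hψV V hV2
    set Vm : Matrix (Fin d) (Fin d) ℂ := (V : Matrix (Fin d) (Fin d) ℂ) with hVm
    set A : Matrix (Fin d) (Fin d) ℂ := Vmᴴ * H * Vm with hAdef
    have hDA := Stmt19Aux.dot_hasDerivAt A ψ tstar hψdiff
    have hLV : L V = fun s => (star (ψ s) ⬝ᵥ A.mulVec (ψ s)).re := funext fun s => hL V s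
    have hderiv : HasDerivAt (L V) ((star ψ' ⬝ᵥ A.mulVec ψs + star ψs ⬝ᵥ A.mulVec ψ').re) tstar := by
      rw [hLV, hψs]
      exact Complex.reCLM.hasFDerivAt.comp_hasDerivAt tstar hDA
    have hd1 : deriv (L V) tstar = (star ψ' ⬝ᵥ A.mulVec ψs + star ψs ⬝ᵥ A.mulVec ψ').re :=
      hderiv.deriv
    have hAH : Aᴴ = A := by
      rw [hAdef, conjTranspose_mul, conjTranspose_mul, conjTranspose_conjTranspose, hH.eq,
        mul_assoc]
    -- simplify the two terms
    have hT2 : star ψs ⬝ᵥ A.mulVec ψ' = star b ⬝ᵥ Vm.mulVec ψ' := by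
      rw [hAdef, mul_assoc]
      rw [← mulVec_mulVec]
      rw [dotProduct_mulVec]
      have : vecMul (star ψs) Vmᴴ = star ψs := by
        rw [← star_mulVec, hVψs]
      rw [this, dotProduct_mulVec, ← vecMul_vecMul, hstarb, ← dotProduct_mulVec]
    have hdot_conj : ∀ (vv ww : Fin d → ℂ) (B : Matrix (Fin d) (Fin d) ℂ),
        star (star vv ⬝ᵥ B.mulVec ww) = star ww ⬝ᵥ Bᴴ.mulVec vv := by
      intro vv ww B
      conv_lhs => rw [star_dotProduct, star_star]
      rw [star_mulVec, ← dotProduct_mulVec]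
    have hT1 : star ψ' ⬝ᵥ A.mulVec ψs = star (star b ⬝ᵥ Vm.mulVec ψ') := by
      rw [← star_star (star ψ' ⬝ᵥ A.mulVec ψs)]
      congr 1
      rw [hdot_conj, hAH, hT2]
    -- split ψ'
    have hψ'split : ψ' = φ + c0 • ψs := by
      rw [hφdef, hPmul, hc0def]
      abel
    have hVψ' : Vm.mulVec ψ' = Vm.mulVec φ + c0 • ψs := by
      rw [hψ'split, mulVec_add, mulVec_smul, hVψs]
    have hsVφ : star ψs ⬝ᵥ Vm.mulVec φ = 0 := by
      rw [dotProduct_mulVec, hψsV]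
      exact hφperp
    have hzV : z V = star b ⬝ᵥ Vm.mulVec φ := by
      show star a ⬝ᵥ Vm.mulVec φ = star b ⬝ᵥ Vm.mulVec φ
      rw [hstara, sub_dotProduct, smul_dotProduct, hsVφ, smul_zero, sub_zero]
    have hzsplit : star b ⬝ᵥ Vm.mulVec ψ' = z V + c0 * β := by
      rw [hVψ', dotProduct_add, dotProduct_smul, hba, smul_eq_mul, hzV]
    rw [hd1, hT1, hT2, hzsplit]
    show (star (z V + c0 * β) + (z V + c0 * β)).re = 2 * (z V).re
    simp only [Complex.add_re, Complex.star_def, Complex.conj_re, Complex.mul_re, hc0re, hβim]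
    ring
  -- a.e. the rotated vector stays in the complement
  have haeQ : ∀ᵐ (V : Matrix.unitaryGroup (Fin d) ℂ) ∂μ,
      Q.mulVec ((V : Matrix (Fin d) (Fin d) ℂ).mulVec φ) = 0 := by
    filter_upwards [hsupp'] with V hV
    rw [hQmul, dotProduct_mulVec, hψV V hV.2, hφperp, zero_smul]
  -- algebra of unitaries of the form x•1 + y•Q
  have hcomb : ∀ E : Matrix (Fin d) (Fin d) ℂ, E * E = E → ∀ x y x' y' : ℂ,
      (x • (1 : Matrix (Fin d) (Fin d) ℂ) + y • E) * (x' • 1 + y' • E)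
        = (x * x') • 1 + (x * y' + y * x' + y * y') • E := by
    intro E hEE x y x' y'
    rw [Matrix.add_mul, Matrix.mul_add, Matrix.mul_add]
    simp only [Matrix.smul_mul, Matrix.mul_smul, smul_smul, Matrix.mul_one, Matrix.one_mul, hEE]
    rw [add_smul, add_smul, mul_comm x x', mul_comm x y', mul_comm y x', mul_comm y y']
    abel
  have hstarform : ∀ E : Matrix (Fin d) (Fin d) ℂ, Eᴴ = E → ∀ x y : ℂ,
      star (x • (1 : Matrix (Fin d) (Fin d) ℂ) + y • E) = (star x) • 1 + (star y) • E := by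
    intro E hEH x y
    rw [Matrix.star_eq_conjTranspose, Matrix.conjTranspose_add, Matrix.conjTranspose_smul,
      Matrix.conjTranspose_smul, hEH, Matrix.conjTranspose_one]
  have hmemform : ∀ E : Matrix (Fin d) (Fin d) ℂ, E * E = E → Eᴴ = E → ∀ x y : ℂ,
      x * star x = 1 → x * star y + y * star x + y * star y = 0 →
      (x • (1 : Matrix (Fin d) (Fin d) ℂ) + y • E) ∈ Matrix.unitaryGroup (Fin d) ℂ := by
    intro E hEE hEH x y h1 h2
    rw [Matrix.mem_unitaryGroup_iff, hstarform E hEH, hcomb E hEE, h1, h2, one_smul,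
      zero_smul, add_zero]
  have hcommQ : ∀ x y : ℂ, x + y = 1 →
      ((x • (1 : Matrix (Fin d) (Fin d) ℂ) + y • Q) * (1 - P) = 1 - P ∧
       (1 - P) * (x • (1 : Matrix (Fin d) (Fin d) ℂ) + y • Q) = 1 - P) := by
    intro x y hxy
    rw [hQP]
    constructor
    · rw [Matrix.add_mul]
      simp only [Matrix.smul_mul, Matrix.one_mul, hQQ]
      rw [← add_smul, hxy, one_smul]
    · rw [Matrix.mul_add]
      simp only [Matrix.mul_smul, Matrix.mul_one, hQQ]
      rw [← add_smul, hxy, one_smul]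
  -- the reflection U0 = -1 on the complement
  have hU0mem : ((-1 : ℂ) • (1 : Matrix (Fin d) (Fin d) ℂ) + (2 : ℂ) • Q)
      ∈ Matrix.unitaryGroup (Fin d) ℂ := by
    apply hmemform Q hQQ hQH
    · simp
    · simp only [star_neg, star_one]
      norm_num
  set U0 : Matrix.unitaryGroup (Fin d) ℂ := ⟨_, hU0mem⟩ with hU0def
  have hU0map : μ.map (fun V => U0 * V) = μ :=
    hinv U0 (hcommQ (-1) 2 (by norm_num)).1 (hcommQ (-1) 2 (by norm_num)).2
  have hg0 : ∫ V, g V ∂μ = 0 := by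
    have h1 : ∫ V, g V ∂μ = ∫ V, g (U0 * V) ∂μ :=
      Stmt19Aux.integral_inv μ U0 hU0map g hmeasg.aestronglyMeasurable
    have h2 : ∀ᵐ (V : Matrix.unitaryGroup (Fin d) ℂ) ∂μ, g (U0 * V) = - g V := by
      filter_upwards [haeQ] with V hV
      have hact : ((U0 * V : Matrix.unitaryGroup (Fin d) ℂ) : Matrix (Fin d) (Fin d) ℂ).mulVec φ
          = -((V : Matrix (Fin d) (Fin d) ℂ).mulVec φ) := by
        show (((-1 : ℂ) • (1 : Matrix (Fin d) (Fin d) ℂ) + (2 : ℂ) • Q)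
            * (V : Matrix (Fin d) (Fin d) ℂ)).mulVec φ = _
        rw [← mulVec_mulVec, add_mulVec, smul_mulVec, smul_mulVec,
          one_mulVec, hV, smul_zero, add_zero, neg_one_smul]
      have hz2 : z (U0 * V) = - z V := by
        show star a ⬝ᵥ _ = -(star a ⬝ᵥ _)
        rw [hact, dotProduct_neg]
      show 2 * (z (U0 * V)).re = -(2 * (z V).re)
      rw [hz2, Complex.neg_re]
      ring
    rw [integral_congr_ae h2, integral_neg] at h1
    linarith
  have hmean : ∫ V, deriv (L V) tstar ∂μ = 0 := by
    rw [integral_congr_ae hae]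
    exact hg0
  refine ⟨hmean, ?_⟩
  -- reduce the variance to ∫ g²
  have hvar1 : (∫ V, (deriv (L V) tstar - ∫ W, deriv (L W) tstar ∂μ) ^ 2 ∂μ)
      = ∫ V, (g V) ^ 2 ∂μ := by
    rw [hmean]
    apply integral_congr_ae
    filter_upwards [hae] with V hV
    rw [hV, sub_zero]
  have hsq : ∀ V, (g V) ^ 2 = 2 * (z V * z V).re + 2 * Complex.normSq (z V) := by
    intro V
    show (2 * (z V).re) ^ 2 = _
    rw [Complex.mul_re, Complex.normSq_apply]
    ring
  set C : ℝ := (∑ i, ‖a i‖) * (∑ j, ‖φ j‖) with hCdef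
  have hC0 : 0 ≤ C := by positivity
  have hzb : ∀ V, ‖z V‖ ≤ C := by
    intro V
    show ‖star a ⬝ᵥ (V : Matrix (Fin d) (Fin d) ℂ).mulVec φ‖ ≤ C
    rw [dotProduct]
    calc ‖∑ i, star a i * (V : Matrix (Fin d) (Fin d) ℂ).mulVec φ i‖
        ≤ ∑ i, ‖star a i * (V : Matrix (Fin d) (Fin d) ℂ).mulVec φ i‖ := norm_sum_le _ _
      _ ≤ ∑ i, ‖a i‖ * (∑ j, ‖φ j‖) := by
          apply Finset.sum_le_sum
          intro i _
          rw [norm_mul, Pi.star_apply, norm_star]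
          exact mul_le_mul_of_nonneg_left (Stmt19Aux.mulVec_bound φ V i) (norm_nonneg _)
      _ = C := by rw [hCdef, Finset.sum_mul]
  have hmeaszz : Measurable (fun V => (z V * z V).re) :=
    Complex.measurable_re.comp (hmeasz.mul hmeasz)
  have hmeasns : Measurable (fun V => Complex.normSq (z V)) := by
    have h : (fun V => Complex.normSq (z V))
        = fun V => (z V).re * (z V).re + (z V).im * (z V).im := by
      funext V; rw [Complex.normSq_apply]
    rw [h]
    exact ((Complex.measurable_re.comp hmeasz).mul (Complex.measurable_re.comp hmeasz)).add
      ((Complex.measurable_im.comp hmeasz).mul (Complex.measurable_im.comp hmeasz))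
  have hnseq : ∀ V, Complex.normSq (z V) = ‖z V‖ * ‖z V‖ := by
    intro V
    rw [Complex.normSq_eq_norm_sq]
    ring
  have hI1 : Integrable (fun V => (z V * z V).re) μ := by
    apply Integrable.mono' (integrable_const (C * C)) hmeaszz.aestronglyMeasurable
    apply ae_of_all
    intro V
    rw [Real.norm_eq_abs]
    calc |(z V * z V).re| ≤ ‖z V * z V‖ := Complex.abs_re_le_norm _
      _ = ‖z V‖ * ‖z V‖ := by rw [norm_mul]
      _ ≤ C * C := mul_le_mul (hzb V) (hzb V) (norm_nonneg _) hC0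
  have hI2 : Integrable (fun V => Complex.normSq (z V)) μ := by
    apply Integrable.mono' (integrable_const (C * C)) hmeasns.aestronglyMeasurable
    apply ae_of_all
    intro V
    rw [Real.norm_eq_abs, _root_.abs_of_nonneg (Complex.normSq_nonneg _), hnseq V]
    exact mul_le_mul (hzb V) (hzb V) (norm_nonneg _) hC0
  have hsplit : ∫ V, (g V) ^ 2 ∂μ
      = 2 * (∫ V, (z V * z V).re ∂μ) + 2 * (∫ V, Complex.normSq (z V) ∂μ) := by
    have h : (fun V => (g V) ^ 2)
        = fun V => 2 * (z V * z V).re + 2 * Complex.normSq (z V) := funext hsq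
    rw [h, integral_add (hI1.const_mul 2) (hI2.const_mul 2), integral_const_mul,
      integral_const_mul]
  -- the phase unitary U1 = i on the complement kills the z² term
  have hU1mem : (Complex.I • (1 : Matrix (Fin d) (Fin d) ℂ) + (1 - Complex.I) • Q)
      ∈ Matrix.unitaryGroup (Fin d) ℂ := by
    apply hmemform Q hQQ hQH
    · rw [Complex.star_def, Complex.conj_I]
      linear_combination (-1 : ℂ) * Complex.I_sq
    · simp only [Complex.star_def, map_sub, _root_.map_one, Complex.conj_I, sub_neg_eq_add]
      linear_combination Complex.I_sq
  set U1 : Matrix.unitaryGroup (Fin d) ℂ := ⟨_, hU1mem⟩ with hU1def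
  have hU1map : μ.map (fun V => U1 * V) = μ :=
    hinv U1 (hcommQ Complex.I (1 - Complex.I) (by ring)).1
      (hcommQ Complex.I (1 - Complex.I) (by ring)).2
  have hzz0 : ∫ V, (z V * z V).re ∂μ = 0 := by
    have h1 : ∫ V, (z V * z V).re ∂μ = ∫ V, (z (U1 * V) * z (U1 * V)).re ∂μ :=
      Stmt19Aux.integral_inv μ U1 hU1map _ hmeaszz.aestronglyMeasurable
    have h2 : ∀ᵐ (V : Matrix.unitaryGroup (Fin d) ℂ) ∂μ,
        (z (U1 * V) * z (U1 * V)).re = -((z V * z V).re) := by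
      filter_upwards [haeQ] with V hV
      have hact : ((U1 * V : Matrix.unitaryGroup (Fin d) ℂ) : Matrix (Fin d) (Fin d) ℂ).mulVec φ
          = Complex.I • ((V : Matrix (Fin d) (Fin d) ℂ).mulVec φ) := by
        show ((Complex.I • (1 : Matrix (Fin d) (Fin d) ℂ) + (1 - Complex.I) • Q)
            * (V : Matrix (Fin d) (Fin d) ℂ)).mulVec φ = _
        rw [← mulVec_mulVec, add_mulVec, smul_mulVec, smul_mulVec,
          one_mulVec, hV, smul_zero, add_zero]
      have hz2 : z (U1 * V) = Complex.I * z V := by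
        show star a ⬝ᵥ _ = _
        rw [hact, dotProduct_smul, smul_eq_mul]
      rw [hz2]
      have h3 : Complex.I * z V * (Complex.I * z V) = -(z V * z V) := by
        linear_combination (z V * z V) * Complex.I_sq
      rw [h3, Complex.neg_re]
    rw [integral_congr_ae h2, integral_neg] at h1
    linarith
  -- the second-moment matrix M
  set w : Matrix.unitaryGroup (Fin d) ℂ → Fin d → ℂ :=
    fun V => (V : Matrix (Fin d) (Fin d) ℂ).mulVec φ with hwdef
  set M : Matrix (Fin d) (Fin d) ℂ :=
    Matrix.of (fun i j => ∫ V, w V i * star (w V j) ∂μ) with hMdef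
  have hMapply : ∀ i j, M i j = ∫ V, w V i * star (w V j) ∂μ := fun i j => rfl
  have hwmeas : ∀ i, Measurable (fun V => w V i) := fun i => Stmt19Aux.meas_mulVec φ i
  have hwb : ∀ (V : Matrix.unitaryGroup (Fin d) ℂ) i, ‖w V i‖ ≤ ∑ j, ‖φ j‖ :=
    fun V i => Stmt19Aux.mulVec_bound φ V i
  have hMint : ∀ i j, Integrable (fun V => w V i * star (w V j)) μ := by
    intro i j
    apply Integrable.mono' (integrable_const ((∑ j, ‖φ j‖) * (∑ j, ‖φ j‖)))
      (((hwmeas i).mul (continuous_star.measurable.comp (hwmeas j))).aestronglyMeasurable)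
    apply ae_of_all
    intro V
    simp only [Pi.mul_apply, Function.comp_apply]
    rw [norm_mul, norm_star]
    exact mul_le_mul (hwb V i) (hwb V j) (norm_nonneg _) (by positivity)
  have hMinv : ∀ (U : Matrix.unitaryGroup (Fin d) ℂ),
      (U : Matrix (Fin d) (Fin d) ℂ) * (1 - P) = 1 - P →
      (1 - P) * (U : Matrix (Fin d) (Fin d) ℂ) = 1 - P →
      M = (U : Matrix (Fin d) (Fin d) ℂ) * M * (U : Matrix (Fin d) (Fin d) ℂ)ᴴ := by
    intro U hU1 hU2
    have hmap := hinv U hU1 hU2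
    ext i j
    have h1 : M i j = ∫ V, w (U * V) i * star (w (U * V) j) ∂μ :=
      Stmt19Aux.integral_inv μ U hmap _ (hMint i j).1
    have h2 : ∀ V : Matrix.unitaryGroup (Fin d) ℂ, w (U * V) i * star (w (U * V) j)
        = ∑ k, ∑ l, (U : Matrix (Fin d) (Fin d) ℂ) i k
            * star ((U : Matrix (Fin d) (Fin d) ℂ) j l) * (w V k * star (w V l)) := by
      intro V
      have hcoe : w (U * V) = (U : Matrix (Fin d) (Fin d) ℂ).mulVec (w V) := by
        show ((U : Matrix (Fin d) (Fin d) ℂ) * (V : Matrix (Fin d) (Fin d) ℂ)).mulVec φ = _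
        rw [← mulVec_mulVec]
      rw [hcoe]
      show (∑ k, (U : Matrix (Fin d) (Fin d) ℂ) i k * w V k)
          * star (∑ l, (U : Matrix (Fin d) (Fin d) ℂ) j l * w V l) = _
      rw [star_sum, Finset.sum_mul_sum]
      apply Finset.sum_congr rfl; intro k _
      apply Finset.sum_congr rfl; intro l _
      rw [star_mul']
      ring
    have h3 : M i j = ∑ k, ∑ l, (U : Matrix (Fin d) (Fin d) ℂ) i k
        * star ((U : Matrix (Fin d) (Fin d) ℂ) j l) * M k l := by
      rw [h1]
      calc ∫ V, w (U * V) i * star (w (U * V) j) ∂μ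
          = ∫ V, ∑ k, ∑ l, (U : Matrix (Fin d) (Fin d) ℂ) i k
              * star ((U : Matrix (Fin d) (Fin d) ℂ) j l) * (w V k * star (w V l)) ∂μ := by
            exact integral_congr_ae (ae_of_all _ h2)
        _ = ∑ k, ∑ l, (U : Matrix (Fin d) (Fin d) ℂ) i k
              * star ((U : Matrix (Fin d) (Fin d) ℂ) j l) * M k l := by
            rw [integral_finset_sum _ (fun k _ =>
              integrable_finset_sum _ (fun l _ => (hMint k l).const_mul _))]
            apply Finset.sum_congr rfl; intro k _
            rw [integral_finset_sum _ (fun l _ => (hMint k l).const_mul _)]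
            apply Finset.sum_congr rfl; intro l _
            rw [integral_const_mul, hMapply]
    rw [h3]
    simp only [Matrix.mul_apply, Matrix.conjTranspose_apply]
    rw [Finset.sum_comm]
    apply Finset.sum_congr rfl; intro l _
    rw [Finset.sum_mul]
    apply Finset.sum_congr rfl; intro k _
    ring
  have haeworth : ∀ᵐ (V : Matrix.unitaryGroup (Fin d) ℂ) ∂μ, star ψs ⬝ᵥ w V = 0 := by
    filter_upwards [hsupp'] with V hV
    show star ψs ⬝ᵥ (V : Matrix (Fin d) (Fin d) ℂ).mulVec φ = 0
    rw [dotProduct_mulVec, hψV V hV.2]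
    exact hφperp
  have hMψs : M.mulVec ψs = 0 := by
    funext i
    show ∑ j, M i j * ψs j = 0
    have h1 : ∀ j, M i j * ψs j = ∫ V, w V i * star (w V j) * ψs j ∂μ := by
      intro j
      rw [hMapply, ← integral_mul_const]
    rw [Finset.sum_congr rfl (fun j _ => h1 j),
      ← integral_finset_sum _ (fun j _ => (hMint i j).mul_const _)]
    have h2 : ∀ᵐ (V : Matrix.unitaryGroup (Fin d) ℂ) ∂μ,
        ∑ j, w V i * star (w V j) * ψs j = 0 := by
      filter_upwards [haeworth] with V hV
      have h3 : ∑ j, w V i * star (w V j) * ψs j = w V i * (star (w V) ⬝ᵥ ψs) := by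
        rw [dotProduct, Finset.mul_sum]
        apply Finset.sum_congr rfl; intro j _
        rw [Pi.star_apply]
        ring
      rw [h3, star_dotProduct (w V) ψs, hV, star_zero, mul_zero]
    rw [integral_congr_ae h2, integral_zero]
  have htrM : ∑ i, M i i = star φ ⬝ᵥ φ := by
    calc ∑ i, M i i = ∫ V, ∑ i, w V i * star (w V i) ∂μ :=
          (integral_finset_sum _ (fun i _ => hMint i i)).symm
      _ = ∫ (_ : Matrix.unitaryGroup (Fin d) ℂ), star φ ⬝ᵥ φ ∂μ := by
          apply integral_congr_ae
          apply ae_of_all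
          intro V
          have hVu : (V : Matrix (Fin d) (Fin d) ℂ)ᴴ * (V : Matrix (Fin d) (Fin d) ℂ) = 1 := by
            have h := V.2.1
            rwa [Matrix.star_eq_conjTranspose] at h
          calc ∑ i, w V i * star (w V i) = star (w V) ⬝ᵥ w V := by
                rw [dotProduct]
                apply Finset.sum_congr rfl; intro i _
                rw [Pi.star_apply]; ring
            _ = star φ ⬝ᵥ φ := by
                show star ((V : Matrix (Fin d) (Fin d) ℂ).mulVec φ) ⬝ᵥ _ = _
                rw [star_mulVec, ← dotProduct_mulVec, mulVec_mulVec, hVu, one_mulVec]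
      _ = star φ ⬝ᵥ φ := by
          rw [integral_const]
          simp
  -- reflections: every unit vector orthogonal to ψs is an eigenvector of M
  have hudot : ∀ u : Fin d → ℂ, star ψs ⬝ᵥ u = 0 → star u ⬝ᵥ ψs = 0 := by
    intro u h
    rw [star_dotProduct u ψs, h, star_zero]
  have hrefl : ∀ u : Fin d → ℂ, star ψs ⬝ᵥ u = 0 → star u ⬝ᵥ u = 1 →
      M.mulVec u = (star u ⬝ᵥ M.mulVec u) • u := by
    intro u hperp hunit
    set Ru : Matrix (Fin d) (Fin d) ℂ := vecMulVec u (star u) with hRudef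
    have hRuH : Ruᴴ = Ru := by
      ext i j
      rw [conjTranspose_apply]
      simp [hRudef, vecMulVec_apply, mul_comm]
    have hRuRu : Ru * Ru = Ru := by
      ext i j
      rw [Matrix.mul_apply]
      simp only [hRudef, vecMulVec_apply]
      calc ∑ k, u i * star (u k) * (u k * star (u j))
          = (∑ k, star (u k) * u k) * (u i * star (u j)) := by
            rw [Finset.sum_mul]
            exact Finset.sum_congr rfl (fun k _ => by ring)
        _ = u i * star (u j) := by rw [show (∑ k, star (u k) * u k) = 1 from hunit, one_mul]
    have hQRu : Q * Ru = 0 := by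
      ext i j
      rw [Matrix.mul_apply, Matrix.zero_apply]
      simp only [hQdef, hRudef, vecMulVec_apply]
      calc ∑ k, ψs i * star (ψs k) * (u k * star (u j))
          = (∑ k, star (ψs k) * u k) * (ψs i * star (u j)) := by
            rw [Finset.sum_mul]
            exact Finset.sum_congr rfl (fun k _ => by ring)
        _ = 0 := by rw [show (∑ k, star (ψs k) * u k) = 0 from hperp, zero_mul]
    have hRuQ : Ru * Q = 0 := by
      ext i j
      rw [Matrix.mul_apply, Matrix.zero_apply]
      simp only [hQdef, hRudef, vecMulVec_apply]
      calc ∑ k, u i * star (u k) * (ψs k * star (ψs j))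
          = (∑ k, star (u k) * ψs k) * (u i * star (ψs j)) := by
            rw [Finset.sum_mul]
            exact Finset.sum_congr rfl (fun k _ => by ring)
        _ = 0 := by rw [show (∑ k, star (u k) * ψs k) = 0 from hudot u hperp, zero_mul]
    have hRmem : ((1:ℂ) • (1 : Matrix (Fin d) (Fin d) ℂ) + (-2:ℂ) • Ru)
        ∈ Matrix.unitaryGroup (Fin d) ℂ := by
      apply hmemform Ru hRuRu hRuH
      · simp
      · simp only [star_one, star_neg]
        norm_num
    set R : Matrix.unitaryGroup (Fin d) ℂ := ⟨_, hRmem⟩ with hRdef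
    have hRcoe : (R : Matrix (Fin d) (Fin d) ℂ) = (1:ℂ) • 1 + (-2:ℂ) • Ru := rfl
    have hRcomm1 : (R : Matrix (Fin d) (Fin d) ℂ) * (1 - P) = 1 - P := by
      rw [hQP, hRcoe, Matrix.add_mul]
      simp only [Matrix.smul_mul, Matrix.one_mul, hRuQ]
      rw [smul_zero, add_zero, one_smul]
    have hRcomm2 : (1 - P) * (R : Matrix (Fin d) (Fin d) ℂ) = 1 - P := by
      rw [hQP, hRcoe, Matrix.mul_add]
      simp only [Matrix.mul_smul, Matrix.mul_one, hQRu]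
      rw [smul_zero, add_zero, one_smul]
    have hMR := hMinv R hRcomm1 hRcomm2
    have hRH : (R : Matrix (Fin d) (Fin d) ℂ)ᴴ = (R : Matrix (Fin d) (Fin d) ℂ) := by
      rw [hRcoe, ← Matrix.star_eq_conjTranspose, hstarform Ru hRuH]
      simp
    have hRR : (R : Matrix (Fin d) (Fin d) ℂ) * (R : Matrix (Fin d) (Fin d) ℂ) = 1 := by
      rw [hRcoe, hcomb Ru hRuRu]
      norm_num
    have hMRu : M * Ru = Ru * M := by
      have hMRR : M * (R : Matrix (Fin d) (Fin d) ℂ)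
          = (R : Matrix (Fin d) (Fin d) ℂ) * M := by
        calc M * (R : Matrix (Fin d) (Fin d) ℂ)
            = ((R : Matrix (Fin d) (Fin d) ℂ) * M * (R : Matrix (Fin d) (Fin d) ℂ)ᴴ)
                * (R : Matrix (Fin d) (Fin d) ℂ) := by rw [← hMR]
          _ = (R : Matrix (Fin d) (Fin d) ℂ) * M * ((R : Matrix (Fin d) (Fin d) ℂ)ᴴ
                * (R : Matrix (Fin d) (Fin d) ℂ)) := by
              rw [mul_assoc ((R : Matrix (Fin d) (Fin d) ℂ) * M)]
          _ = (R : Matrix (Fin d) (Fin d) ℂ) * M := by rw [hRH, hRR, mul_one]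
      rw [hRcoe, Matrix.mul_add, Matrix.add_mul] at hMRR
      simp only [Matrix.mul_smul, Matrix.smul_mul, Matrix.mul_one, Matrix.one_mul,
        one_smul] at hMRR
      have h4 := add_left_cancel hMRR
      have h5 : ((-2:ℂ))⁻¹ • ((-2:ℂ) • (M * Ru)) = ((-2:ℂ))⁻¹ • ((-2:ℂ) • (Ru * M)) := by
        rw [h4]
      rwa [smul_smul, smul_smul, inv_mul_cancel₀ (by norm_num), one_smul, one_smul] at h5
    have h6 : (M * Ru).mulVec u = M.mulVec u := by
      rw [← mulVec_mulVec]
      rw [hRudef, Stmt19Aux.vecMulVec_mulVec', hunit, one_smul]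
    have h7 : (Ru * M).mulVec u = (star u ⬝ᵥ M.mulVec u) • u := by
      rw [← mulVec_mulVec, hRudef, Stmt19Aux.vecMulVec_mulVec']
    calc M.mulVec u = (M * Ru).mulVec u := h6.symm
      _ = (Ru * M).mulVec u := by rw [hMRu]
      _ = (star u ⬝ᵥ M.mulVec u) • u := h7
  -- existence of a unit vector orthogonal to ψs
  have hEx : ∃ u0 : Fin d → ℂ, star ψs ⬝ᵥ u0 = 0 ∧ star u0 ⬝ᵥ u0 = 1 := by
    have hi01 : (⟨0, by omega⟩ : Fin d) ≠ ⟨1, by omega⟩ := by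
      intro h
      exact absurd (congrArg Fin.val h) (by norm_num)
    set i0 : Fin d := ⟨0, by omega⟩
    set i1 : Fin d := ⟨1, by omega⟩
    have hval : ∀ i : Fin d, P.mulVec (Pi.single i 1) = 0 →
        Pi.single i 1 = (star (ψs i) * 1) • ψs := by
      intro i h
      have h2 := hPmul (Pi.single i 1)
      rw [h, dotProduct_single] at h2
      exact sub_eq_zero.mp h2.symm
    by_cases h0 : P.mulVec (Pi.single i0 1) = 0
    · have he0 := hval i0 h0
      have hψ0 : star (ψs i0) * ψs i0 = 1 := by
        have h := congrFun he0 i0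
        simpa [Pi.single_eq_same] using h.symm
      by_cases h1 : P.mulVec (Pi.single i1 1) = 0
      · exfalso
        have he1 := hval i1 h1
        have hψ10 : star (ψs i1) * ψs i0 = 0 := by
          have h := congrFun he1 i0
          simpa [Pi.single_eq_of_ne hi01] using h.symm
        have hψ11 : star (ψs i1) * ψs i1 = 1 := by
          have h := congrFun he1 i1
          simpa [Pi.single_eq_same] using h.symm
        have hne0 : ψs i0 ≠ 0 := by
          intro h
          rw [h, mul_zero] at hψ0
          exact one_ne_zero hψ0.symm
        have hne1 : star (ψs i1) ≠ 0 := by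
          intro h
          rw [h, zero_mul] at hψ11
          exact one_ne_zero hψ11.symm
        exact hne1 (by
          rcases mul_eq_zero.mp hψ10 with h | h
          · exact h
          · exact absurd h hne0)
      · obtain ⟨u, r, _, _, hperp, hunit⟩ :=
          Stmt19Aux.normalize_vec ψs _ (hPorth (Pi.single i1 1)) h1
        exact ⟨u, hperp, hunit⟩
    · obtain ⟨u, r, _, _, hperp, hunit⟩ :=
        Stmt19Aux.normalize_vec ψs _ (hPorth (Pi.single i0 1)) h0
      exact ⟨u, hperp, hunit⟩
  obtain ⟨u0, hu0perp, hu0unit⟩ := hEx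
  set lam : ℂ := star u0 ⬝ᵥ M.mulVec u0 with hlamdef
  have hunit_ne : ∀ u : Fin d → ℂ, star u ⬝ᵥ u = 1 → u ≠ 0 := by
    intro u h hu
    rw [hu] at h
    exact one_ne_zero (h.symm.trans (by simp [dotProduct]))
  have hconst : ∀ u : Fin d → ℂ, star ψs ⬝ᵥ u = 0 → star u ⬝ᵥ u = 1 →
      star u ⬝ᵥ M.mulVec u = lam := by
    intro u hperp hunit
    by_cases hdep : ∃ α : ℂ, u = α • u0
    · obtain ⟨α, hα⟩ := hdep
      have hαα : star α * α = 1 := by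
        have h := hunit
        rw [hα, star_smul, smul_dotProduct, dotProduct_smul, hu0unit] at h
        simpa [smul_eq_mul] using h
      rw [hα, star_smul, smul_dotProduct, mulVec_smul, dotProduct_smul]
      simp only [smul_eq_mul]
      rw [← hlamdef, ← mul_assoc, hαα, one_mul]
    · push_neg at hdep
      set v : Fin d → ℂ := u + u0 with hvdef
      have hvne : v ≠ 0 := by
        intro h0
        apply hdep (-1)
        have h : u = -u0 := by
          have := eq_neg_of_add_eq_zero_left h0
          exact this
        rw [h, neg_one_smul]
      have hvperp : star ψs ⬝ᵥ v = 0 := by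
        rw [hvdef, dotProduct_add, hperp, hu0perp, add_zero]
      obtain ⟨uv, r, hr, hveq, huvperp, huvunit⟩ := Stmt19Aux.normalize_vec ψs v hvperp hvne
      set lv : ℂ := star uv ⬝ᵥ M.mulVec uv with hlvdef
      have hMv : M.mulVec v = lv • v := by
        rw [hveq, mulVec_smul, hrefl uv huvperp huvunit, ← hlvdef, smul_comm]
      set lu : ℂ := star u ⬝ᵥ M.mulVec u with hludef
      have hMv2 : M.mulVec v = lu • u + lam • u0 := by
        rw [hvdef, mulVec_add, hrefl u hperp hunit, hrefl u0 hu0perp hu0unit,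
          ← hludef, ← hlamdef]
      have hkey : (lu - lv) • u = (lv - lam) • u0 := by
        have h8 := hMv.symm.trans hMv2
        rw [hvdef, smul_add] at h8
        have h9 : lv • u + lv • u0 - (lu • u + lam • u0) = 0 := sub_eq_zero.mpr h8
        have h10 : (lu - lv) • u - (lv - lam) • u0
            = -(lv • u + lv • u0 - (lu • u + lam • u0)) := by
          rw [sub_smul, sub_smul]
          abel
        rw [h9, neg_zero] at h10
        exact sub_eq_zero.mp h10
      by_cases hlv : lu = lv
      · rw [hlv, sub_self, zero_smul] at hkey
        have h10 : lv - lam = 0 := by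
          by_contra h10
          exact hunit_ne u0 hu0unit ((smul_eq_zero.mp hkey.symm).resolve_left h10)
        rw [hlv]
        exact sub_eq_zero.mp h10
      · exfalso
        apply hdep ((lu - lv)⁻¹ * (lv - lam))
        have h11 : (lu - lv)⁻¹ • ((lu - lv) • u) = (lu - lv)⁻¹ • ((lv - lam) • u0) := by
          rw [hkey]
        rwa [smul_smul, smul_smul, inv_mul_cancel₀ (sub_ne_zero.mpr hlv), one_smul] at h11
  have heig : ∀ u : Fin d → ℂ, star ψs ⬝ᵥ u = 0 → M.mulVec u = lam • u := by
    intro u hperp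
    by_cases hu : u = 0
    · rw [hu, mulVec_zero, smul_zero]
    · obtain ⟨uu, r, hr, hueq, huuperp, huuunit⟩ := Stmt19Aux.normalize_vec ψs u hperp hu
      rw [hueq, mulVec_smul, hrefl uu huuperp huuunit, hconst uu huuperp huuunit, smul_comm]
  -- value of lam via the trace
  have hMa : M.mulVec a = lam • a := heig a haperp
  have hMallx : ∀ x : Fin d → ℂ, M.mulVec x = lam • P.mulVec x := by
    intro x
    have hx : x = P.mulVec x + (star ψs ⬝ᵥ x) • ψs := by rw [hPmul]; abel
    calc M.mulVec x = M.mulVec (P.mulVec x + (star ψs ⬝ᵥ x) • ψs) := by rw [← hx]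
      _ = M.mulVec (P.mulVec x) + (star ψs ⬝ᵥ x) • M.mulVec ψs := by
          rw [mulVec_add, mulVec_smul]
      _ = lam • P.mulVec x := by rw [hMψs, smul_zero, add_zero, heig _ (hPorth x)]
  have htrP : ∑ i, P i i = (d : ℂ) - 1 := by
    calc ∑ i, P i i
        = ∑ i, ((1 : Matrix (Fin d) (Fin d) ℂ) i i - ψs i * star (ψs i)) := by
          apply Finset.sum_congr rfl; intro i _
          rw [hPdef, Matrix.sub_apply]
          rfl
      _ = (d : ℂ) - 1 := by
          rw [Finset.sum_sub_distrib]
          have h1 : ∑ i : Fin d, (1 : Matrix (Fin d) (Fin d) ℂ) i i = (d : ℂ) := by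
            simp [Matrix.one_apply_eq]
          have h2 : ∑ i, ψs i * star (ψs i) = 1 := by
            rw [← hψs1']
            exact Finset.sum_congr rfl (fun i _ => by ring)
          rw [h1, h2]
  have hlamval : lam * ((d : ℂ) - 1) = star φ ⬝ᵥ φ := by
    have h1 : ∀ i, M i i = lam * P i i := by
      intro i
      have h2 := congrFun (hMallx (Pi.single i 1)) i
      simpa [mulVec_single] using h2
    calc lam * ((d : ℂ) - 1) = ∑ i, lam * P i i := by rw [← htrP, Finset.mul_sum]
      _ = ∑ i, M i i := Finset.sum_congr rfl (fun i _ => (h1 i).symm)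
      _ = star φ ⬝ᵥ φ := htrM
  set sφ : ℝ := ∑ i, Complex.normSq (φ i) with hsφdef
  set sa : ℝ := ∑ i, Complex.normSq (a i) with hsadef
  have hφreal : star φ ⬝ᵥ φ = (sφ : ℂ) := Stmt19Aux.self_dot φ
  have hareal : star a ⬝ᵥ a = (sa : ℂ) := Stmt19Aux.self_dot a
  have hdne : ((d : ℝ) - 1) ≠ 0 := by
    have h : (2 : ℝ) ≤ d := by exact_mod_cast hd
    linarith
  have hlam2 : lam = ((sφ / ((d : ℝ) - 1) : ℝ) : ℂ) := by
    have hcast : ((d : ℂ) - 1) = (((d : ℝ) - 1 : ℝ) : ℂ) := by push_cast; ring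
    have h1 : lam = (sφ : ℂ) / (((d : ℝ) - 1 : ℝ) : ℂ) := by
      rw [eq_div_iff (by exact_mod_cast hdne), ← hcast, hlamval, hφreal]
    rw [h1]
    push_cast
    ring
  have hNS : ∫ V, Complex.normSq (z V) ∂μ = (star a ⬝ᵥ M.mulVec a).re := by
    have h1b : (∫ V, ((Complex.normSq (z V) : ℝ) : ℂ) ∂μ)
        = ((∫ V, Complex.normSq (z V) ∂μ : ℝ) : ℂ) := integral_ofReal
    have h1 : ((∫ V, Complex.normSq (z V) ∂μ : ℝ) : ℂ) = star a ⬝ᵥ M.mulVec a := by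
      rw [← h1b]
      have h2 : ∀ V : Matrix.unitaryGroup (Fin d) ℂ, ((Complex.normSq (z V) : ℝ) : ℂ)
          = ∑ i, ∑ j, (star (a i) * a j) * (w V i * star (w V j)) := by
        intro V
        have h3 : z V = ∑ i, star (a i) * w V i := rfl
        have h4 : star (z V) = ∑ j, a j * star (w V j) := by
          rw [h3, star_sum]
          apply Finset.sum_congr rfl; intro j _
          rw [star_mul', star_star]
        calc ((Complex.normSq (z V) : ℝ) : ℂ) = z V * star (z V) := by
              rw [Complex.star_def, Complex.mul_conj]
            _ = ∑ i, ∑ j, (star (a i) * a j) * (w V i * star (w V j)) := by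
              rw [h4, h3, Finset.sum_mul_sum]
              apply Finset.sum_congr rfl; intro i _
              apply Finset.sum_congr rfl; intro j _
              ring
      calc ∫ V, ((Complex.normSq (z V) : ℝ) : ℂ) ∂μ
          = ∫ V, ∑ i, ∑ j, (star (a i) * a j) * (w V i * star (w V j)) ∂μ :=
            integral_congr_ae (ae_of_all _ h2)
        _ = ∑ i, ∑ j, (star (a i) * a j) * M i j := by
            rw [integral_finset_sum _ (fun i _ =>
              integrable_finset_sum _ (fun j _ => (hMint i j).const_mul _))]
            apply Finset.sum_congr rfl; intro i _
            rw [integral_finset_sum _ (fun j _ => (hMint i j).const_mul _)]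
            apply Finset.sum_congr rfl; intro j _
            rw [integral_const_mul, hMapply]
        _ = star a ⬝ᵥ M.mulVec a := by
            show _ = ∑ i, star a i * (∑ j, M i j * a j)
            apply Finset.sum_congr rfl; intro i _
            rw [Finset.mul_sum]
            apply Finset.sum_congr rfl; intro j _
            rw [Pi.star_apply]
            ring
    have h5 := congrArg Complex.re h1
    simpa using h5
  have hNSval : ∫ V, Complex.normSq (z V) ∂μ = sφ / ((d : ℝ) - 1) * sa := by
    rw [hNS, hMa, dotProduct_smul, smul_eq_mul, hareal, hlam2, ← Complex.ofReal_mul,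
      Complex.ofReal_re]
  have hbb : star b ⬝ᵥ b = star ψs ⬝ᵥ (H * H).mulVec ψs := by
    calc star b ⬝ᵥ b = (vecMul (star ψs) H) ⬝ᵥ b := by rw [hstarb]
      _ = star ψs ⬝ᵥ H.mulVec b := by rw [← dotProduct_mulVec]
      _ = star ψs ⬝ᵥ (H * H).mulVec ψs := by rw [hbdef, mulVec_mulVec]
  have hsaval : (sa : ℂ) = star ψs ⬝ᵥ (H * H).mulVec ψs - β * β := by
    rw [← hareal]
    nth_rewrite 1 [hstara]
    nth_rewrite 1 [hadef]
    simp only [sub_dotProduct, dotProduct_sub, smul_dotProduct, dotProduct_smul, smul_eq_mul]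
    rw [hba, ← hβdef, hψs1, hbb]
    ring
  have hsare : sa = (star ψs ⬝ᵥ (H * H).mulVec ψs).re - ((star ψs ⬝ᵥ H.mulVec ψs).re) ^ 2 := by
    have h1 := congrArg Complex.re hsaval
    rw [Complex.ofReal_re, Complex.sub_re, Complex.mul_re, hβim] at h1
    have h2 : (star ψs ⬝ᵥ H.mulVec ψs).re = β.re := rfl
    rw [h1, h2]
    ring
  have hsφre : F = 2 * sφ := by
    have hφval : (sφ : ℂ) = star ψ' ⬝ᵥ ψ' - c0 * star c0 := by
      rw [← hφreal, hφdef, hPmul, star_sub, star_smul]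
      simp only [sub_dotProduct, dotProduct_sub, smul_dotProduct, dotProduct_smul, smul_eq_mul]
      rw [← hc0def, hψs1, star_dotProduct ψ' ψs, ← hc0def]
      ring
    have h1 := congrArg Complex.re hφval
    rw [Complex.ofReal_re, Complex.sub_re] at h1
    have h2 : (c0 * star c0).re = Complex.normSq c0 := by
      rw [Complex.star_def, Complex.mul_conj, Complex.ofReal_re]
    have h3 : Complex.normSq (star ψ' ⬝ᵥ ψs) = Complex.normSq c0 := by
      rw [star_dotProduct ψ' ψs, ← hc0def]
      exact Complex.normSq_conj _
    rw [hF, h3, h1, h2]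
  rw [hvar1, hsplit, hzz0, hNSval, hsare, hsφre]
  field_simp
  ring
end
end
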